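/- arXiv:0707.0313 — 5 statements merged into one kernel-verified Lean document; each statement's English description precedes it below -/
import Mathlib

section
/- Let x : [0,1] → B be of finite ρ-variation. Then for every s < t in [0,1], the ρ'-variation |x|_{ρ'-var;[s,t]} converges to |x|_{ρ-var;[s,t]} as ρ' decreases to ρ. In particular ω(s,t) := lim_{ρ'↓ρ} |x|^{ρ'}_{ρ'-var;[s,t]} is a superadditive function dominating |x|^ρ_{ρ-var;[s,t]}. -/
/-- A dissection (subdivision) of the interval `[s,t]`:
a monotone tuple starting at `s` and ending at `t`. -/
def IsDissection (s t : ℝ) {n : ℕ} (P : Fin (n + 1) → ℝ) : Prop :=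
  Monotone P ∧ P 0 = s ∧ P (Fin.last n) = t

/-- The rectangular increment `f((s,t),(u,v)) = f(s,u)+f(t,v)-f(s,v)-f(t,u)`. -/
def rectInc {B : Type*} [NormedAddCommGroup B] (f : ℝ → ℝ → B) (s t u v : ℝ) : B :=
  f s u + f t v - f s v - f t u

/-- The set of approximating sums for the 2D `ρ`-variation of `f` over `[s,t] × [u,v]`:
sums over pairs of dissections of the `ρ`-th powers of rectangular increments. -/
def varSums2D {B : Type*} [NormedAddCommGroup B] (f : ℝ → ℝ → B)
    (ρ s t u v : ℝ) : Set ℝ :=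
  { x | ∃ (n m : ℕ) (P : Fin (n + 1) → ℝ) (Q : Fin (m + 1) → ℝ),
      IsDissection s t P ∧ IsDissection u v Q ∧
      x = ∑ i : Fin n, ∑ j : Fin m,
        ‖rectInc f (P i.castSucc) (P i.succ) (Q j.castSucc) (Q j.succ)‖ ^ ρ }

/-- The set of approximating sums for the (1D) `ρ`-variation of a path over `[s,t]`. -/
def varSums1D {B : Type*} [NormedAddCommGroup B] (x : ℝ → B) (ρ s t : ℝ) : Set ℝ :=
  { y | ∃ (n : ℕ) (P : Fin (n + 1) → ℝ), IsDissection s t P ∧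
      y = ∑ i : Fin n, ‖x (P i.succ) - x (P i.castSucc)‖ ^ ρ }

section Aux

variable {B : Type*} [NormedAddCommGroup B]

lemma nonneg_of_mem' {x : ℝ → B} {ρ s t y : ℝ} (hy : y ∈ varSums1D x ρ s t) : 0 ≤ y := by
  obtain ⟨n, P, _, rfl⟩ := hy
  exact Finset.sum_nonneg fun i _ => Real.rpow_nonneg (norm_nonneg _) _

lemma single_mem' (x : ℝ → B) (ρ : ℝ) {s t : ℝ} (hst : s ≤ t) :
    ‖x t - x s‖ ^ ρ ∈ varSums1D x ρ s t := by
  refine ⟨1, ![s, t], ⟨?_, rfl, rfl⟩, ?_⟩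
  · intro a b hab
    fin_cases a <;> fin_cases b <;> simp_all
  · simp

lemma le_extend' {x : ℝ → B} {ρ s t y : ℝ} (h0 : 0 ≤ s) (h1 : t ≤ 1)
    (hy : y ∈ varSums1D x ρ s t) : ∃ z ∈ varSums1D x ρ 0 1, y ≤ z := by
  obtain ⟨n, P, ⟨hmono, hP0, hPl⟩, rfl⟩ := hy
  set Q : Fin (n + 2 + 1) → ℝ := fun k =>
    if hk1 : (k : ℕ) = 0 then 0 else if hk2 : (k : ℕ) = n + 2 then 1
      else P ⟨(k : ℕ) - 1, by have := k.isLt; omega⟩ with hQdef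
  have hQeval : ∀ (m : ℕ) (h : m < n + 1) (h2 : m + 1 < n + 3),
      Q ⟨m + 1, h2⟩ = P ⟨m, h⟩ := by
    intro m h h2
    simp only [hQdef]
    rw [dif_neg (by omega), dif_neg (by omega)]
    exact congrArg P (Fin.ext (by simp))
  have hPle : ∀ j : Fin (n+1), s ≤ P j ∧ P j ≤ t := by
    intro j
    constructor
    · rw [← hP0]; exact hmono (Fin.zero_le j)
    · rw [← hPl]; exact hmono (Fin.le_last j)
  have hP0' : ∀ j, (0:ℝ) ≤ P j := fun j => le_trans h0 (hPle j).1
  have hP1' : ∀ j, P j ≤ 1 := fun j => le_trans (hPle j).2 h1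
  have hQmono : Monotone Q := by
    intro a b hab
    have hab' : (a : ℕ) ≤ (b : ℕ) := hab
    simp only [hQdef]
    by_cases ha0 : (a : ℕ) = 0
    · rw [dif_pos ha0]
      by_cases hb0 : (b : ℕ) = 0
      · rw [dif_pos hb0]
      · rw [dif_neg hb0]
        by_cases hbn : (b : ℕ) = n + 2
        · rw [dif_pos hbn]; exact zero_le_one
        · rw [dif_neg hbn]; exact hP0' _
    · rw [dif_neg ha0]
      have hb0 : ¬(b : ℕ) = 0 := by omega
      rw [dif_neg hb0]
      by_cases han : (a : ℕ) = n + 2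
      · rw [dif_pos han, dif_pos (show (b : ℕ) = n + 2 by omega)]
      · rw [dif_neg han]
        by_cases hbn : (b : ℕ) = n + 2
        · rw [dif_pos hbn]; exact hP1' _
        · rw [dif_neg hbn]; exact hmono (Fin.mk_le_mk.2 (by omega))
  have hQ0 : Q 0 = 0 := by simp [hQdef]
  have hQl : Q (Fin.last (n + 2)) = 1 := by simp [hQdef]
  have hmid : ∀ i : Fin n,
      ‖x (Q ((Fin.castSucc i).succ).succ) - x (Q ((Fin.castSucc i).succ).castSucc)‖ ^ ρ
        = ‖x (P i.succ) - x (P i.castSucc)‖ ^ ρ := by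
    intro i
    have e1 : Q ((Fin.castSucc i).succ).succ = P i.succ := by
      have e : (((Fin.castSucc i).succ).succ : Fin (n+3)) = ⟨(i : ℕ) + 1 + 1, by omega⟩ :=
        Fin.ext (by simp)
      rw [e, hQeval ((i : ℕ) + 1) (by omega)]
      exact congrArg P (Fin.ext (by simp))
    have e2 : Q ((Fin.castSucc i).succ).castSucc = P i.castSucc := by
      have e : (((Fin.castSucc i).succ).castSucc : Fin (n+3)) = ⟨(i : ℕ) + 1, by omega⟩ :=
        Fin.ext (by simp)
      rw [e, hQeval (i : ℕ) (by omega)]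
      exact congrArg P (Fin.ext (by simp))
    rw [e1, e2]
  refine ⟨_, ⟨n + 2, Q, ⟨hQmono, hQ0, hQl⟩, rfl⟩, ?_⟩
  rw [Fin.sum_univ_succ, Fin.sum_univ_castSucc]
  rw [Finset.sum_congr rfl fun (i : Fin n) _ => hmid i]
  have h1 : (0:ℝ) ≤ ‖x (Q (Fin.succ 0)) - x (Q (Fin.castSucc 0))‖ ^ ρ :=
    Real.rpow_nonneg (norm_nonneg _) _
  have h2 : (0:ℝ) ≤ ‖x (Q ((Fin.last n).succ).succ) - x (Q ((Fin.last n).succ).castSucc)‖ ^ ρ :=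
    Real.rpow_nonneg (norm_nonneg _) _
  linarith

lemma concat_mem' {x : ℝ → B} {ρ s t u a b : ℝ} (ha : a ∈ varSums1D x ρ s t)
    (hb : b ∈ varSums1D x ρ t u) : a + b ∈ varSums1D x ρ s u := by
  obtain ⟨n, P, ⟨hPm, hP0, hPl⟩, rfl⟩ := ha
  obtain ⟨m, Q, ⟨hQm, hQ0, hQl⟩, rfl⟩ := hb
  set R : Fin (n + m + 1) → ℝ := fun k =>
    if hk : (k : ℕ) < n then P ⟨(k : ℕ), by omega⟩
      else Q ⟨(k : ℕ) - n, by have := k.isLt; omega⟩ with hRdef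
  have hRP : ∀ (v : ℕ) (h : v ≤ n) (h2 : v < n + m + 1), R ⟨v, h2⟩ = P ⟨v, by omega⟩ := by
    intro v h h2
    by_cases hv : v < n
    · simp only [hRdef]; rw [dif_pos hv]
    · have hv' : v = n := by omega
      simp only [hRdef]
      rw [dif_neg (by omega)]
      have e1 : (⟨v - n, by omega⟩ : Fin (m + 1)) = 0 := Fin.ext (by simp; omega)
      have e2 : (⟨v, by omega⟩ : Fin (n + 1)) = Fin.last n := Fin.ext (by simp [hv'])
      rw [e1, e2, hQ0, hPl]
  have hRQ : ∀ (v : ℕ) (h : n ≤ v) (h2 : v < n + m + 1),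
      R ⟨v, h2⟩ = Q ⟨v - n, by omega⟩ := by
    intro v h h2
    by_cases hv : v < n
    · omega
    · simp only [hRdef]; rw [dif_neg hv]
  have hRm : Monotone R := by
    intro k l hkl
    have hkl' : (k : ℕ) ≤ (l : ℕ) := hkl
    by_cases hk : (k : ℕ) < n
    · by_cases hl : (l : ℕ) < n
      · have e1 := hRP k (by omega) k.isLt
        have e2 := hRP l (by omega) l.isLt
        rw [show k = (⟨(k:ℕ), k.isLt⟩ : Fin (n+m+1)) from Fin.ext rfl, e1]
        rw [show l = (⟨(l:ℕ), l.isLt⟩ : Fin (n+m+1)) from Fin.ext rfl, e2]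
        exact hPm (Fin.mk_le_mk.2 hkl')
      · have e1 := hRP k (by omega) k.isLt
        have e2 := hRQ l (by omega) l.isLt
        rw [show k = (⟨(k:ℕ), k.isLt⟩ : Fin (n+m+1)) from Fin.ext rfl, e1]
        rw [show l = (⟨(l:ℕ), l.isLt⟩ : Fin (n+m+1)) from Fin.ext rfl, e2]
        calc P ⟨(k:ℕ), by omega⟩ ≤ P (Fin.last n) := hPm (Fin.le_last _)
          _ = t := hPl
          _ = Q 0 := hQ0.symm
          _ ≤ Q ⟨(l:ℕ) - n, by omega⟩ := hQm (Fin.zero_le _)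
    · have hl : ¬ (l : ℕ) < n := by omega
      have e1 := hRQ k (by omega) k.isLt
      have e2 := hRQ l (by omega) l.isLt
      rw [show k = (⟨(k:ℕ), k.isLt⟩ : Fin (n+m+1)) from Fin.ext rfl, e1]
      rw [show l = (⟨(l:ℕ), l.isLt⟩ : Fin (n+m+1)) from Fin.ext rfl, e2]
      exact hQm (Fin.mk_le_mk.2 (by omega))
  have hR0 : R 0 = s := by
    have := hRP 0 (by omega) (by omega)
    rw [show (0 : Fin (n+m+1)) = ⟨0, by omega⟩ from Fin.ext rfl, this]
    rw [show (⟨0, by omega⟩ : Fin (n+1)) = 0 from Fin.ext rfl, hP0]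
  have hRl : R (Fin.last (n + m)) = u := by
    have := hRQ (n + m) (by omega) (by omega)
    rw [show (Fin.last (n+m) : Fin (n+m+1)) = ⟨n + m, by omega⟩ from Fin.ext rfl, this]
    rw [show (⟨n + m - n, by omega⟩ : Fin (m+1)) = Fin.last m from Fin.ext (by simp), hQl]
  refine ⟨n + m, R, ⟨hRm, hR0, hRl⟩, ?_⟩
  rw [Fin.sum_univ_add (f := fun i : Fin (n + m) => ‖x (R i.succ) - x (R i.castSucc)‖ ^ ρ)]
  congr 1
  · refine Finset.sum_congr rfl fun i _ => ?_
    have e1 : R (Fin.castAdd m i).succ = P i.succ := by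
      rw [show ((Fin.castAdd m i).succ : Fin (n+m+1)) = ⟨(i:ℕ)+1, by omega⟩ from Fin.ext (by simp),
        hRP ((i:ℕ)+1) (by omega)]
      exact congrArg P (Fin.ext (by simp))
    have e2 : R (Fin.castAdd m i).castSucc = P i.castSucc := by
      rw [show ((Fin.castAdd m i).castSucc : Fin (n+m+1)) = ⟨(i:ℕ), by omega⟩ from Fin.ext (by simp),
        hRP (i:ℕ) (by omega)]
      exact congrArg P (Fin.ext (by simp))
    rw [e1, e2]
  · refine Finset.sum_congr rfl fun j _ => ?_
    have e1 : R (Fin.natAdd n j).succ = Q j.succ := by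
      rw [show ((Fin.natAdd n j).succ : Fin (n+m+1)) = ⟨n+(j:ℕ)+1, by omega⟩ from Fin.ext (by simp),
        hRQ (n+(j:ℕ)+1) (by omega)]
      exact congrArg Q (Fin.ext (by simp; omega))
    have e2 : R (Fin.natAdd n j).castSucc = Q j.castSucc := by
      rw [show ((Fin.natAdd n j).castSucc : Fin (n+m+1)) = ⟨n+(j:ℕ), by omega⟩ from Fin.ext (by simp),
        hRQ (n+(j:ℕ)) (by omega)]
      exact congrArg Q (Fin.ext (by simp))
    rw [e1, e2]

lemma two_rpow' {a c r : ℝ} (ha : 0 ≤ a) (hc : 0 ≤ c) (hr : 1 ≤ r) :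
    a ^ r + c ^ r ≤ (a + c) ^ r := by
  have hr0 : r ≠ 0 := by positivity
  lift a to NNReal using ha
  lift c to NNReal using hc
  rw [← NNReal.coe_add, ← NNReal.coe_rpow, ← NNReal.coe_rpow, ← NNReal.coe_rpow,
    ← NNReal.coe_add, NNReal.coe_le_coe]
  have h := NNReal.rpow_add_rpow_le_add a c hr
  calc a ^ r + c ^ r = ((a ^ r + c ^ r) ^ (1 / r)) ^ r := by
        rw [← NNReal.rpow_mul, one_div, inv_mul_cancel₀ hr0, NNReal.rpow_one]
    _ ≤ (a + c) ^ r := NNReal.rpow_le_rpow h (by linarith)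

lemma sum_rpow_le' {n : ℕ} (b : Fin n → ℝ) (hb : ∀ i, 0 ≤ b i) {r : ℝ} (hr : 1 ≤ r) :
    ∑ i, b i ^ r ≤ (∑ i, b i) ^ r := by
  have hr0 : r ≠ 0 := by positivity
  induction n with
  | zero => simp [Real.zero_rpow hr0]
  | succ k ih =>
    rw [Fin.sum_univ_succ, Fin.sum_univ_succ]
    calc b 0 ^ r + ∑ i : Fin k, b i.succ ^ r
        ≤ b 0 ^ r + (∑ i : Fin k, b i.succ) ^ r := by
          have := ih (fun i => b i.succ) (fun i => hb _)
          linarith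
      _ ≤ (b 0 + ∑ i : Fin k, b i.succ) ^ r :=
          two_rpow' (hb 0) (Finset.sum_nonneg fun i _ => hb _) hr

lemma mem_le_pow' {x : ℝ → B} {ρ ρ' s t : ℝ} (hρ : 0 < ρ) (hle : ρ ≤ ρ')
    (hbdd : BddAbove (varSums1D x ρ s t)) :
    ∀ y ∈ varSums1D x ρ' s t, y ≤ (sSup (varSums1D x ρ s t)) ^ (ρ' / ρ) := by
  rintro y ⟨n, P, hP, rfl⟩
  have hmem : (∑ i : Fin n, ‖x (P i.succ) - x (P i.castSucc)‖ ^ ρ) ∈ varSums1D x ρ s t :=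
    ⟨n, P, hP, rfl⟩
  have hr1 : 1 ≤ ρ' / ρ := (one_le_div hρ).2 hle
  calc ∑ i : Fin n, ‖x (P i.succ) - x (P i.castSucc)‖ ^ ρ'
      = ∑ i : Fin n, (‖x (P i.succ) - x (P i.castSucc)‖ ^ ρ) ^ (ρ' / ρ) := by
        refine Finset.sum_congr rfl fun i _ => ?_
        rw [← Real.rpow_mul (norm_nonneg _)]
        congr 1
        field_simp
    _ ≤ (∑ i : Fin n, ‖x (P i.succ) - x (P i.castSucc)‖ ^ ρ) ^ (ρ' / ρ) :=
        sum_rpow_le' _ (fun i => Real.rpow_nonneg (norm_nonneg _) _) hr1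
    _ ≤ (sSup (varSums1D x ρ s t)) ^ (ρ' / ρ) :=
        Real.rpow_le_rpow (nonneg_of_mem' hmem) (le_csSup hbdd hmem) (by positivity)

lemma bddAbove' {x : ℝ → B} {ρ ρ' s t : ℝ} (hρ : 0 < ρ) (hle : ρ ≤ ρ')
    (hbdd : BddAbove (varSums1D x ρ s t)) : BddAbove (varSums1D x ρ' s t) :=
  ⟨_, fun y hy => mem_le_pow' hρ hle hbdd y hy⟩

lemma sup_nonneg' {x : ℝ → B} {ρ s t : ℝ} (hst : s ≤ t)
    (hbdd : BddAbove (varSums1D x ρ s t)) : 0 ≤ sSup (varSums1D x ρ s t) :=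
  le_trans (Real.rpow_nonneg (norm_nonneg _) _) (le_csSup hbdd (single_mem' x ρ hst))

lemma norm_anti' {x : ℝ → B} {ρ ρ' s t : ℝ} (hρ : 0 < ρ) (hle : ρ ≤ ρ') (hρ' : 0 < ρ')
    (hst : s ≤ t) (hbdd : BddAbove (varSums1D x ρ s t)) :
    sSup (varSums1D x ρ' s t) ^ ρ'⁻¹ ≤ sSup (varSums1D x ρ s t) ^ ρ⁻¹ := by
  have hV0 : 0 ≤ sSup (varSums1D x ρ s t) := sup_nonneg' hst hbdd
  have h1 : sSup (varSums1D x ρ' s t) ≤ sSup (varSums1D x ρ s t) ^ (ρ' / ρ) :=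
    csSup_le ⟨_, single_mem' x ρ' hst⟩ (mem_le_pow' hρ hle hbdd)
  have h2 : 0 ≤ sSup (varSums1D x ρ' s t) := sup_nonneg' hst (bddAbove' hρ hle hbdd)
  calc sSup (varSums1D x ρ' s t) ^ ρ'⁻¹
      ≤ (sSup (varSums1D x ρ s t) ^ (ρ' / ρ)) ^ ρ'⁻¹ :=
        Real.rpow_le_rpow h2 h1 (by positivity)
    _ = sSup (varSums1D x ρ s t) ^ ρ⁻¹ := by
        rw [← Real.rpow_mul hV0]
        congr 1
        field_simp

end Aux


/-- for `x : [0,1] → B` of finite `ρ`-variation, the `ρ'`-variation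
`|x|_{ρ'-var;[s,t]}` converges to `|x|_{ρ-var;[s,t]}` as `ρ' ↓ ρ`, for every `s < t`;
in particular `ω(s,t) := |x|^ρ_{ρ-var;[s,t]}` is superadditive and dominates
`‖x_{s,t}‖^ρ`. -/
theorem stmt_3 {B : Type*} [NormedAddCommGroup B]
    (x : ℝ → B) (ρ : ℝ) (hρ : 1 ≤ ρ)
    (hfin : BddAbove (varSums1D x ρ 0 1)) :
    (∀ s t, 0 ≤ s → s < t → t ≤ 1 →
      Filter.Tendsto (fun ρ' => (sSup (varSums1D x ρ' s t)) ^ ρ'⁻¹)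
        (nhdsWithin ρ (Set.Ioi ρ)) (nhds ((sSup (varSums1D x ρ s t)) ^ ρ⁻¹))) ∧
    (∀ s t u, 0 ≤ s → s ≤ t → t ≤ u → u ≤ 1 →
      sSup (varSums1D x ρ s t) + sSup (varSums1D x ρ t u) ≤ sSup (varSums1D x ρ s u)) ∧
    (∀ s t, 0 ≤ s → s ≤ t → t ≤ 1 →
      ‖x t - x s‖ ^ ρ ≤ sSup (varSums1D x ρ s t)) := by
  have hρ0 : 0 < ρ := lt_of_lt_of_le one_pos hρ
  have hbdd : ∀ s t : ℝ, 0 ≤ s → t ≤ 1 → BddAbove (varSums1D x ρ s t) := by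
    intro s t h0 h1
    obtain ⟨C, hC⟩ := hfin
    refine ⟨C, fun y hy => ?_⟩
    obtain ⟨z, hz, hyz⟩ := le_extend' h0 h1 hy
    exact hyz.trans (hC hz)
  refine ⟨?_, ?_, ?_⟩
  · -- tendsto
    intro s t hs hst ht1
    have hst' : s ≤ t := hst.le
    have hb : BddAbove (varSums1D x ρ s t) := hbdd s t hs ht1
    have hA0 : 0 ≤ sSup (varSums1D x ρ s t) := sup_nonneg' hst' hb
    rw [tendsto_order]
    constructor
    · intro b hb'
      rcases lt_or_ge b 0 with hbneg | hb0
      · filter_upwards [self_mem_nhdsWithin] with σ hσ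
        have hσρ : ρ ≤ σ := (Set.mem_Ioi.1 hσ).le
        exact lt_of_lt_of_le hbneg
          (Real.rpow_nonneg (sup_nonneg' hst' (bddAbove' hρ0 hσρ hb)) _)
      · have hbρ : b ^ ρ < sSup (varSums1D x ρ s t) := by
          have := Real.rpow_lt_rpow hb0 hb' hρ0
          rwa [Real.rpow_inv_rpow hA0 (ne_of_gt hρ0)] at this
        obtain ⟨y, hy, hby⟩ := exists_lt_of_lt_csSup ⟨_, single_mem' x ρ hst'⟩ hbρ
        obtain ⟨n, P, hP, rfl⟩ := hy
        set g : ℝ → ℝ := fun σ => ∑ i : Fin n, ‖x (P i.succ) - x (P i.castSucc)‖ ^ σ with hgdef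
        have hgpos : 0 < g ρ := lt_of_le_of_lt (Real.rpow_nonneg hb0 _) hby
        have hgcont : ContinuousAt g ρ := by
          apply tendsto_finset_sum
          intro i _
          exact (Real.continuousAt_rpow (‖x (P i.succ) - x (P i.castSucc)‖, ρ)
            (Or.inr hρ0)).comp ((continuous_const.prodMk continuous_id).continuousAt)
        have hcont2 : ContinuousAt (fun σ => g σ ^ σ⁻¹) ρ :=
          hgcont.rpow (continuousAt_inv₀ (ne_of_gt hρ0)) (Or.inl (ne_of_gt hgpos))
        have hval : b < g ρ ^ ρ⁻¹ := by
          have h := Real.rpow_lt_rpow (Real.rpow_nonneg hb0 _) hby (inv_pos.2 hρ0)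
          rwa [Real.rpow_rpow_inv hb0 (ne_of_gt hρ0)] at h
        have hev : ∀ᶠ σ in nhds ρ, b < g σ ^ σ⁻¹ := hcont2.eventually (eventually_gt_nhds hval)
        filter_upwards [mem_nhdsWithin_of_mem_nhds hev, self_mem_nhdsWithin] with σ h1 h2
        have hσρ : ρ ≤ σ := (Set.mem_Ioi.1 h2).le
        have hgmem : g σ ∈ varSums1D x σ s t := ⟨n, P, hP, rfl⟩
        have hg0 : 0 ≤ g σ := nonneg_of_mem' hgmem
        refine lt_of_lt_of_le h1 (Real.rpow_le_rpow hg0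
          (le_csSup (bddAbove' hρ0 hσρ hb) hgmem) ?_)
        have : 0 < σ := lt_of_lt_of_le hρ0 hσρ
        positivity
    · intro b hb'
      filter_upwards [self_mem_nhdsWithin] with σ hσ
      have hσρ : ρ ≤ σ := (Set.mem_Ioi.1 hσ).le
      exact lt_of_le_of_lt (norm_anti' hρ0 hσρ (lt_of_lt_of_le hρ0 hσρ) hst' hb) hb'
  · -- superadditivity
    intro s t u hs hst htu hu1
    have hbst : BddAbove (varSums1D x ρ s t) := hbdd s t hs (le_trans htu hu1)
    have hbtu : BddAbove (varSums1D x ρ t u) := hbdd t u (le_trans hs hst) hu1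
    have hbsu : BddAbove (varSums1D x ρ s u) := hbdd s u hs hu1
    have hA : (varSums1D x ρ s t).Nonempty := ⟨_, single_mem' x ρ hst⟩
    have hB : (varSums1D x ρ t u).Nonempty := ⟨_, single_mem' x ρ htu⟩
    have key : ∀ p ∈ varSums1D x ρ s t, ∀ q ∈ varSums1D x ρ t u,
        p + q ≤ sSup (varSums1D x ρ s u) := fun p hp q hq =>
      le_csSup hbsu (concat_mem' hp hq)
    have h1 : sSup (varSums1D x ρ s t) ≤ sSup (varSums1D x ρ s u) - sSup (varSums1D x ρ t u) := by
      refine csSup_le hA fun p hp => ?_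
      have h2 : sSup (varSums1D x ρ t u) ≤ sSup (varSums1D x ρ s u) - p :=
        csSup_le hB fun q hq => by linarith [key p hp q hq]
      linarith
    linarith
  · -- domination
    intro s t hs hst ht1
    exact le_csSup (hbdd s t hs ht1) (single_mem' x ρ hst)
end

section
/- Let B^H be fractional Brownian motion with Hurst parameter H ∈ (0,1/2]. Then its covariance R(s,t) = (1/2)(s^{2H}+t^{2H}-|t-s|^{2H}) has finite 2D 1/(2H)-variation, and moreover its 1/(2H)-variation over [s,t]² is bounded by C_H |t-s|^{2H} raised to the appropriate power; in particular |R|^{1/(2H)}_{1/(2H)-var;[s,t]²} ≤ C_H |t-s|. -/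
/-- The covariance of fractional Brownian motion with Hurst parameter `H`. -/
noncomputable def fbmCov (H : ℝ) (s t : ℝ) : ℝ :=
  (1 / 2) * (s ^ (2 * H) + t ^ (2 * H) - |t - s| ^ (2 * H))

open Finset

/-- Concavity increment inequality for `x ^ z`, `0 < z ≤ 1`. -/
lemma key_ineq {z : ℝ} (hz0 : 0 < z) (hz1 : z ≤ 1) {u v δ : ℝ}
    (hu : 0 ≤ u) (huv : u ≤ v) (hδ : 0 ≤ δ) :
    (v + δ) ^ z + u ^ z ≤ (u + δ) ^ z + v ^ z := by
  rcases eq_or_lt_of_le huv with rfl | huv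
  · exact le_refl _
  rcases eq_or_lt_of_le hδ with rfl | hδ'
  · simp only [add_zero]; linarith
  have hcc := Real.concaveOn_rpow hz0.le hz1
  have hT : 0 < v + δ - u := by linarith
  set lam := (v - u) / (v + δ - u) with hlam_def
  set mu := δ / (v + δ - u) with hmu_def
  have hlam : 0 ≤ lam := div_nonneg (by linarith) hT.le
  have hmu : 0 ≤ mu := div_nonneg hδ hT.le
  have hsum : lam + mu = 1 := by
    rw [hlam_def, hmu_def, ← add_div, show v - u + δ = v + δ - u by ring]
    exact div_self hT.ne'
  have hmem1 : u ∈ Set.Ici (0:ℝ) := hu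
  have hmem2 : v + δ ∈ Set.Ici (0:ℝ) := by
    simp only [Set.mem_Ici]; linarith
  have h1 := hcc.2 hmem1 hmem2 hlam hmu hsum
  have h2 := hcc.2 hmem1 hmem2 hmu hlam (by linarith)
  simp only [smul_eq_mul] at h1 h2
  have e1 : lam * u + mu * (v + δ) = u + δ := by
    rw [hlam_def, hmu_def]; field_simp; ring
  have e2 : mu * u + lam * (v + δ) = v := by
    rw [hlam_def, hmu_def]; field_simp; ring
  rw [e1] at h1
  rw [e2] at h2
  have hs : lam * u ^ z + mu * (v + δ) ^ z + (mu * u ^ z + lam * (v + δ) ^ z)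
      = (lam + mu) * (u ^ z + (v + δ) ^ z) := by ring
  rw [hsum, one_mul] at hs
  linarith

lemma subadd {z : ℝ} (hz0 : 0 < z) (hz1 : z ≤ 1) {x y : ℝ} (hx : 0 ≤ x) (hy : 0 ≤ y) :
    (x + y) ^ z ≤ x ^ z + y ^ z := by
  have h := key_ineq (u := 0) (v := x) (δ := y) hz0 hz1 le_rfl hx hy
  rw [Real.zero_rpow hz0.ne', zero_add, add_zero] at h
  linarith

lemma rpow_add_le {ρ a b : ℝ} (hρ : 1 ≤ ρ) (ha : 0 ≤ a) (hb : 0 ≤ b) :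
    a ^ ρ + b ^ ρ ≤ (a + b) ^ ρ := by
  rcases eq_or_lt_of_le ha with rfl | ha'
  · rw [Real.zero_rpow (by linarith : ρ ≠ 0), zero_add, zero_add]
  rcases eq_or_lt_of_le hb with rfl | hb'
  · rw [Real.zero_rpow (by linarith : ρ ≠ 0), add_zero, add_zero]
  have e1 : a ^ ρ = a ^ (ρ - 1) * a := by
    nth_rewrite 3 [← Real.rpow_one a]
    rw [← Real.rpow_add ha']; ring_nf
  have e2 : b ^ ρ = b ^ (ρ - 1) * b := by
    nth_rewrite 3 [← Real.rpow_one b]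
    rw [← Real.rpow_add hb']; ring_nf
  have e3 : (a + b) ^ ρ = (a + b) ^ (ρ - 1) * (a + b) := by
    nth_rewrite 3 [← Real.rpow_one (a + b)]
    rw [← Real.rpow_add (by linarith : (0:ℝ) < a + b)]; ring_nf
  have h1 : a ^ (ρ - 1) ≤ (a + b) ^ (ρ - 1) :=
    Real.rpow_le_rpow ha (by linarith) (by linarith)
  have h2 : b ^ (ρ - 1) ≤ (a + b) ^ (ρ - 1) :=
    Real.rpow_le_rpow hb (by linarith) (by linarith)
  rw [e1, e2, e3]
  nlinarith

lemma sum_rpow_le {ι : Type*} (s : Finset ι) (f : ι → ℝ) (hf : ∀ i ∈ s, 0 ≤ f i)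
    {ρ : ℝ} (hρ : 1 ≤ ρ) :
    ∑ i ∈ s, f i ^ ρ ≤ (∑ i ∈ s, f i) ^ ρ := by
  induction s using Finset.cons_induction with
  | empty => simp [Real.zero_rpow (by linarith : ρ ≠ 0)]
  | cons a s ha ih =>
    rw [Finset.sum_cons, Finset.sum_cons]
    have h1 : 0 ≤ f a := hf a (Finset.mem_cons_self _ _)
    have h2 : 0 ≤ ∑ i ∈ s, f i :=
      Finset.sum_nonneg fun i hi => hf i (Finset.mem_cons_of_mem hi)
    calc f a ^ ρ + ∑ i ∈ s, f i ^ ρ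
        ≤ f a ^ ρ + (∑ i ∈ s, f i) ^ ρ := by
          have := ih (fun i hi => hf i (Finset.mem_cons_of_mem hi))
          linarith
      _ ≤ (f a + ∑ i ∈ s, f i) ^ ρ := rpow_add_le hρ h1 h2

lemma fin_telescope {m : ℕ} (g : Fin (m + 1) → ℝ) :
    ∑ j : Fin m, (g j.succ - g j.castSucc) = g (Fin.last m) - g 0 := by
  induction m with
  | zero => simp [Fin.last]
  | succ m ih =>
    rw [Fin.sum_univ_castSucc]
    have h2 : ∀ j : Fin m, g j.castSucc.succ - g j.castSucc.castSucc
        = (g ∘ Fin.castSucc) j.succ - (g ∘ Fin.castSucc) j.castSucc := by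
      intro j
      simp only [Function.comp_apply, Fin.succ_castSucc]
    rw [Finset.sum_congr rfl fun j _ => h2 j, ih (g ∘ Fin.castSucc)]
    simp [Fin.succ_last]

open Finset

/- (aux lemmas assumed: key_ineq subadd rpow_add_le sum_rpow_le fin_telescope,
   defs IsDissection rectInc varSums2D fbmCov) -/

section FBM

variable {H : ℝ}

noncomputable def hfn (H a b w : ℝ) : ℝ := fbmCov H b w - fbmCov H a w

lemma hf_diff (H a b u v : ℝ) :
    hfn H a b v - hfn H a b u =
      (1/2) * (|v - a| ^ (2*H) - |u - a| ^ (2*H) + |u - b| ^ (2*H) - |v - b| ^ (2*H)) := by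
  unfold hfn fbmCov
  ring

variable (hH0 : 0 < H) (hH : H ≤ 1/2)
include hH0 hH

/-- `hfn` is antitone to the left of `a`. -/
lemma hL_anti {a b c d : ℝ} (hcd : c ≤ d) (hda : d ≤ a) (hab : a ≤ b) :
    hfn H a b d ≤ hfn H a b c := by
  have hz0 : 0 < 2*H := by linarith
  have hz1 : 2*H ≤ 1 := by linarith
  have hd := hf_diff H a b c d
  rw [abs_sub_comm d a, abs_of_nonneg (by linarith : (0:ℝ) ≤ a - d),
      abs_sub_comm c a, abs_of_nonneg (by linarith : (0:ℝ) ≤ a - c),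
      abs_sub_comm c b, abs_of_nonneg (by linarith : (0:ℝ) ≤ b - c),
      abs_sub_comm d b, abs_of_nonneg (by linarith : (0:ℝ) ≤ b - d)] at hd
  have hk := key_ineq hz0 hz1 (by linarith : (0:ℝ) ≤ a - d)
    (by linarith : a - d ≤ a - c) (by linarith : (0:ℝ) ≤ b - a)
  rw [show a - c + (b - a) = b - c by ring, show a - d + (b - a) = b - d by ring] at hk
  linarith

/-- left "defect" is nonnegative. -/
lemma kL_nonneg {a b c : ℝ} (hca : c ≤ a) (hab : a ≤ b) :
    0 ≤ hfn H a b c - hfn H a b a := by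
  have hz0 : 0 < 2*H := by linarith
  have hz1 : 2*H ≤ 1 := by linarith
  have hd := hf_diff H a b a c
  rw [abs_sub_comm c a, abs_of_nonneg (by linarith : (0:ℝ) ≤ a - c), sub_self,
      abs_zero, abs_sub_comm a b, abs_of_nonneg (by linarith : (0:ℝ) ≤ b - a),
      abs_sub_comm c b, abs_of_nonneg (by linarith : (0:ℝ) ≤ b - c),
      Real.zero_rpow hz0.ne'] at hd
  have hk := subadd hz0 hz1 (by linarith : (0:ℝ) ≤ a - c) (by linarith : (0:ℝ) ≤ b - a)
  rw [show a - c + (b - a) = b - c by ring] at hk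
  linarith

/-- `hfn` is antitone to the right of `b`. -/
lemma hR_anti {a b c d : ℝ} (hcd : c ≤ d) (hbc : b ≤ c) (hab : a ≤ b) :
    hfn H a b d ≤ hfn H a b c := by
  have hz0 : 0 < 2*H := by linarith
  have hz1 : 2*H ≤ 1 := by linarith
  have hd := hf_diff H a b c d
  rw [abs_of_nonneg (by linarith : (0:ℝ) ≤ d - a),
      abs_of_nonneg (by linarith : (0:ℝ) ≤ c - a),
      abs_of_nonneg (by linarith : (0:ℝ) ≤ c - b),
      abs_of_nonneg (by linarith : (0:ℝ) ≤ d - b)] at hd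
  have hk := key_ineq hz0 hz1 (by linarith : (0:ℝ) ≤ c - b)
    (by linarith : c - b ≤ d - b) (by linarith : (0:ℝ) ≤ b - a)
  rw [show d - b + (b - a) = d - a by ring, show c - b + (b - a) = c - a by ring] at hk
  linarith

/-- right "defect" is nonpositive. -/
lemma kR_nonpos {a b d : ℝ} (hbd : b ≤ d) (hab : a ≤ b) :
    hfn H a b d - hfn H a b b ≤ 0 := by
  have hz0 : 0 < 2*H := by linarith
  have hz1 : 2*H ≤ 1 := by linarith
  have hd := hf_diff H a b b d
  rw [abs_of_nonneg (by linarith : (0:ℝ) ≤ d - a),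
      abs_of_nonneg (by linarith : (0:ℝ) ≤ b - a), sub_self, abs_zero,
      abs_of_nonneg (by linarith : (0:ℝ) ≤ d - b),
      Real.zero_rpow hz0.ne'] at hd
  have hk := subadd hz0 hz1 (by linarith : (0:ℝ) ≤ d - b) (by linarith : (0:ℝ) ≤ b - a)
  rw [show d - b + (b - a) = d - a by ring] at hk
  linarith

/-- `hfn` is monotone on `[a, b]`. -/
lemma mid_mono {a b u v : ℝ} (hau : a ≤ u) (huv : u ≤ v) (hvb : v ≤ b) :
    0 ≤ hfn H a b v - hfn H a b u := by
  have hz0 : 0 < 2*H := by linarith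
  have hd := hf_diff H a b u v
  rw [abs_of_nonneg (by linarith : (0:ℝ) ≤ v - a),
      abs_of_nonneg (by linarith : (0:ℝ) ≤ u - a),
      abs_sub_comm u b, abs_of_nonneg (by linarith : (0:ℝ) ≤ b - u),
      abs_sub_comm v b, abs_of_nonneg (by linarith : (0:ℝ) ≤ b - v)] at hd
  have h1 : (u - a) ^ (2*H) ≤ (v - a) ^ (2*H) :=
    Real.rpow_le_rpow (by linarith) (by linarith) hz0.le
  have h2 : (b - v) ^ (2*H) ≤ (b - u) ^ (2*H) :=
    Real.rpow_le_rpow (by linarith) (by linarith) hz0.le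
  linarith

/-- The defect `w ↦ hfn w - hfn (clamp w)` is antitone. -/
lemma k_mono {a b c d : ℝ} (hab : a ≤ b) (hcd : c ≤ d) :
    hfn H a b d - hfn H a b (max a (min b d)) ≤
      hfn H a b c - hfn H a b (max a (min b c)) := by
  rcases le_total d a with hda | had
  · -- both left
    rw [min_eq_right (le_trans hda hab), max_eq_left hda,
        min_eq_right (le_trans (hcd.trans hda) hab), max_eq_left (hcd.trans hda)]
    have := hL_anti hH0 hH hcd hda hab
    linarith
  rcases le_total b c with hbc | hcb
  · -- both right
    rw [min_eq_left hbc, max_eq_right hab, min_eq_left (hbc.trans hcd), max_eq_right hab]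
    have := hR_anti hH0 hH hcd hbc hab
    linarith
  · -- c ≤ b and a ≤ d
    have hcd' : hfn H a b d - hfn H a b (max a (min b d)) ≤ 0 := by
      rcases le_total d b with hdb | hbd
      · rw [min_eq_right hdb, max_eq_right had]
        simp
      · rw [min_eq_left hbd, max_eq_right hab]
        exact kR_nonpos hH0 hH hbd hab
    have hcc' : 0 ≤ hfn H a b c - hfn H a b (max a (min b c)) := by
      rcases le_total c a with hca | hac
      · rw [min_eq_right (hca.trans hab), max_eq_left hca]
        exact kL_nonneg hH0 hH hca hab
      · rw [min_eq_right hcb, max_eq_right hac]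
        simp
    linarith

lemma term_bound {a b c d : ℝ} (hab : a ≤ b) (hcd : c ≤ d) :
    |hfn H a b d - hfn H a b c| ≤
      2 * (hfn H a b (max a (min b d)) - hfn H a b (max a (min b c)))
        - (hfn H a b d - hfn H a b c) := by
  have hk := k_mono hH0 hH hab hcd
  have hclc : a ≤ max a (min b c) := le_max_left _ _
  have hcld : max a (min b d) ≤ b := max_le hab (min_le_left _ _)
  have hclm : max a (min b c) ≤ max a (min b d) :=
    max_le_max le_rfl (min_le_min le_rfl hcd)
  have hm := mid_mono hH0 hH hclc hclm hcld
  rw [abs_le]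
  constructor <;> linarith

lemma diag_eq {a b : ℝ} (hab : a ≤ b) :
    hfn H a b b - hfn H a b a = (b - a) ^ (2*H) := by
  have hz0 : 0 < 2*H := by linarith
  have hd := hf_diff H a b a b
  rw [abs_of_nonneg (by linarith : (0:ℝ) ≤ b - a), sub_self, abs_zero,
      abs_sub_comm a b, abs_of_nonneg (by linarith : (0:ℝ) ≤ b - a), sub_self, abs_zero,
      Real.zero_rpow hz0.ne'] at hd
  linarith

lemma row_bound {s t a b : ℝ} (hsa : s ≤ a) (hab : a ≤ b) (hbt : b ≤ t)
    {m : ℕ} {Q : Fin (m+1) → ℝ} (hQ : IsDissection s t Q) :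
    ∑ j : Fin m, |hfn H a b (Q j.succ) - hfn H a b (Q j.castSucc)| ≤
      2 * (b - a) ^ (2*H) := by
  obtain ⟨hmono, hQ0, hQl⟩ := hQ
  have hstep : ∀ j ∈ (univ : Finset (Fin m)),
      |hfn H a b (Q j.succ) - hfn H a b (Q j.castSucc)| ≤
      2 * ((fun w : Fin (m+1) => hfn H a b (max a (min b (Q w)))) j.succ
            - (fun w : Fin (m+1) => hfn H a b (max a (min b (Q w)))) j.castSucc)
        - ((fun w : Fin (m+1) => hfn H a b (Q w)) j.succ
            - (fun w : Fin (m+1) => hfn H a b (Q w)) j.castSucc) :=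
    fun j _ => term_bound hH0 hH hab (hmono (Fin.castSucc_le_succ j))
  have h1 := Finset.sum_le_sum hstep
  rw [Finset.sum_sub_distrib, ← Finset.mul_sum,
      fin_telescope (fun w : Fin (m+1) => hfn H a b (max a (min b (Q w)))),
      fin_telescope (fun w : Fin (m+1) => hfn H a b (Q w)), hQ0, hQl] at h1
  have hclt : max a (min b t) = b := by
    rw [min_eq_left hbt, max_eq_right hab]
  have hcls : max a (min b s) = a := by
    rw [min_eq_right (hsa.trans hab), max_eq_left hsa]
  rw [hclt, hcls, diag_eq hH0 hH hab] at h1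
  have hend : 0 ≤ hfn H a b t - hfn H a b s := by
    have hz0 : 0 < 2*H := by linarith
    have hd := hf_diff H a b s t
    rw [abs_of_nonneg (by linarith : (0:ℝ) ≤ t - a),
        abs_sub_comm s a, abs_of_nonneg (by linarith : (0:ℝ) ≤ a - s),
        abs_sub_comm s b, abs_of_nonneg (by linarith : (0:ℝ) ≤ b - s),
        abs_of_nonneg (by linarith : (0:ℝ) ≤ t - b)] at hd
    have h2 : (t - b) ^ (2*H) ≤ (t - a) ^ (2*H) :=
      Real.rpow_le_rpow (by linarith) (by linarith) hz0.le
    have h3 : (a - s) ^ (2*H) ≤ (b - s) ^ (2*H) :=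
      Real.rpow_le_rpow (by linarith) (by linarith) hz0.le
    linarith
  linarith

lemma main_bound {s t : ℝ} (hst : s ≤ t) :
    ∀ x ∈ varSums2D (fbmCov H) (1/(2*H)) s t s t, x ≤ 2 ^ (1/(2*H)) * (t - s) := by
  intro x hx
  obtain ⟨n, m, P, Q, hP, hQ, rfl⟩ := hx
  set ρ := 1/(2*H) with hρdef
  have hH2 : 0 < 2*H := by linarith
  have hρ1 : 1 ≤ ρ := by rw [hρdef, le_div_iff₀ hH2]; linarith
  have hρ0 : (0:ℝ) ≤ ρ := by linarith
  obtain ⟨hPm, hP0, hPl⟩ := hP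
  have hrow : ∀ i ∈ (univ : Finset (Fin n)),
      ∑ j : Fin m, ‖rectInc (fbmCov H) (P i.castSucc) (P i.succ)
        (Q j.castSucc) (Q j.succ)‖ ^ ρ
      ≤ 2 ^ ρ * ((fun w => P w) i.succ - (fun w => P w) i.castSucc) := by
    intro i _
    have hab : P i.castSucc ≤ P i.succ := hPm (Fin.castSucc_le_succ i)
    have hΔ : (0:ℝ) ≤ P i.succ - P i.castSucc := by linarith
    have hsa : s ≤ P i.castSucc := by rw [← hP0]; exact hPm (Fin.zero_le _)
    have hbt : P i.succ ≤ t := by rw [← hPl]; exact hPm (Fin.le_last _)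
    have hnorm : ∀ j : Fin m, ‖rectInc (fbmCov H) (P i.castSucc) (P i.succ)
        (Q j.castSucc) (Q j.succ)‖
        = |hfn H (P i.castSucc) (P i.succ) (Q j.succ)
            - hfn H (P i.castSucc) (P i.succ) (Q j.castSucc)| := by
      intro j
      rw [Real.norm_eq_abs]
      congr 1
      unfold rectInc hfn
      ring
    calc ∑ j : Fin m, ‖rectInc (fbmCov H) (P i.castSucc) (P i.succ)
          (Q j.castSucc) (Q j.succ)‖ ^ ρ
        = ∑ j : Fin m, |hfn H (P i.castSucc) (P i.succ) (Q j.succ)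
            - hfn H (P i.castSucc) (P i.succ) (Q j.castSucc)| ^ ρ := by
          exact Finset.sum_congr rfl fun j _ => by rw [hnorm j]
      _ ≤ (∑ j : Fin m, |hfn H (P i.castSucc) (P i.succ) (Q j.succ)
            - hfn H (P i.castSucc) (P i.succ) (Q j.castSucc)|) ^ ρ :=
          sum_rpow_le _ _ (fun j _ => abs_nonneg _) hρ1
      _ ≤ (2 * (P i.succ - P i.castSucc) ^ (2*H)) ^ ρ :=
          Real.rpow_le_rpow (Finset.sum_nonneg fun j _ => abs_nonneg _)
            (row_bound hH0 hH hsa hab hbt hQ) hρ0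
      _ = 2 ^ ρ * (P i.succ - P i.castSucc) := by
          rw [Real.mul_rpow (by norm_num) (Real.rpow_nonneg hΔ _),
              ← Real.rpow_mul hΔ]
          have he : 2*H*ρ = 1 := by rw [hρdef]; field_simp
          rw [he, Real.rpow_one]
  calc ∑ i : Fin n, ∑ j : Fin m, ‖rectInc (fbmCov H) (P i.castSucc) (P i.succ)
        (Q j.castSucc) (Q j.succ)‖ ^ ρ
      ≤ ∑ i : Fin n, 2 ^ ρ * ((fun w => P w) i.succ - (fun w => P w) i.castSucc) :=
        Finset.sum_le_sum hrow
    _ = 2 ^ ρ * ∑ i : Fin n, ((fun w => P w) i.succ - (fun w => P w) i.castSucc) := by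
        rw [Finset.mul_sum]
    _ = 2 ^ ρ * (t - s) := by rw [fin_telescope (fun w => P w), hP0, hPl]

end FBM


/-- for `H ∈ (0,1/2]`, the covariance of fractional Brownian motion has
finite 2D `1/(2H)`-variation, and its `1/(2H)`-variation (to the power `1/(2H)`) over
`[s,t]²` is bounded by `C_H |t-s|`. -/
theorem stmt_5 (H : ℝ) (hH0 : 0 < H) (hH : H ≤ 1 / 2) :
    ∃ C : ℝ, 0 < C ∧
      (BddAbove (varSums2D (fbmCov H) (1 / (2 * H)) 0 1 0 1) ∧
      ∀ s t, 0 ≤ s → s ≤ t → t ≤ 1 →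
        ∀ x ∈ varSums2D (fbmCov H) (1 / (2 * H)) s t s t, x ≤ C * (t - s)) := by
  refine ⟨2 ^ (1/(2*H)), Real.rpow_pos_of_pos two_pos _, ?_, ?_⟩
  · refine ⟨2 ^ (1/(2*H)), fun x hx => ?_⟩
    have h := main_bound hH0 hH (zero_le_one) x hx
    simpa using h
  · intro s t _ hst _ x hx
    exact main_bound hH0 hH hst x hx
end

section
/- For fractional Brownian motion B^H with H ∈ (0,1/2] and intervals [u,v] ⊂ [s,t], one has |E(B^H_{u,v} B^H_{s,t})| ≤ 2c_H (v-u)^{2H}, where c_H is the constant in the covariance formula. Consequently, for any dissection (t_i) of [s,t], Σ_i |E(B^H_{t_i,t_{i+1}} B^H_{s,t})|^{1/(2H)} ≤ C_H |t-s|. -/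
lemma subadd_rpow {p x y : ℝ} (hp0 : 0 ≤ p) (hp1 : p ≤ 1) (hx : 0 ≤ x) (hy : 0 ≤ y) :
    (x + y) ^ p ≤ x ^ p + y ^ p := by
  lift x to NNReal using hx
  lift y to NNReal using hy
  exact_mod_cast NNReal.rpow_add_le_add_rpow x y hp0 hp1

lemma telescope_fin {n : ℕ} (P : Fin (n + 1) → ℝ) :
    ∑ i : Fin n, (P i.succ - P i.castSucc) = P (Fin.last n) - P 0 := by
  set f : ℕ → ℝ := fun k => P ⟨min k n, Nat.lt_succ_of_le (min_le_right _ _)⟩ with hf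
  have h1 : ∑ i : Fin n, (P i.succ - P i.castSucc) = ∑ i ∈ Finset.range n, (f (i+1) - f i) := by
    rw [Finset.sum_range fun i => f (i+1) - f i]
    refine Finset.sum_congr rfl fun i _ => ?_
    have hi : (i : ℕ) < n := i.isLt
    simp only [hf]
    congr 2 <;> exact Fin.ext (by simp only [Fin.val_succ, Fin.coe_castSucc]; omega)
  rw [h1, Finset.sum_range_sub f]
  simp [hf, Fin.last]

lemma key_bound (H : ℝ) (hH0 : 0 < H) (hH : H ≤ 1 / 2) (s u v t : ℝ)
    (hs : 0 ≤ s) (hsu : s ≤ u) (huv : u ≤ v) (hvt : v ≤ t) :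
    0 ≤ rectInc (fbmCov H) u v s t ∧ rectInc (fbmCov H) u v s t ≤ (v - u) ^ (2 * H) := by
  have hp0 : (0:ℝ) ≤ 2 * H := by linarith
  have hp1 : 2 * H ≤ 1 := by linarith
  have habs1 : |s - u| = u - s := by rw [abs_of_nonpos (by linarith)]; ring
  have habs2 : |t - v| = t - v := abs_of_nonneg (by linarith)
  have habs3 : |t - u| = t - u := abs_of_nonneg (by linarith)
  have habs4 : |s - v| = v - s := by rw [abs_of_nonpos (by linarith)]; ring
  have hA0 : (t - v) ^ (2 * H) ≤ (t - u) ^ (2 * H) :=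
    Real.rpow_le_rpow (by linarith) (by linarith) hp0
  have hA1 : (t - u) ^ (2 * H) ≤ (v - u) ^ (2 * H) + (t - v) ^ (2 * H) := by
    have h : t - u = (v - u) + (t - v) := by ring
    rw [h]; exact subadd_rpow hp0 hp1 (by linarith) (by linarith)
  have hB0 : (u - s) ^ (2 * H) ≤ (v - s) ^ (2 * H) :=
    Real.rpow_le_rpow (by linarith) (by linarith) hp0
  have hB1 : (v - s) ^ (2 * H) ≤ (v - u) ^ (2 * H) + (u - s) ^ (2 * H) := by
    have h : v - s = (v - u) + (u - s) := by ring
    rw [h]; exact subadd_rpow hp0 hp1 (by linarith) (by linarith)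
  simp only [rectInc, fbmCov, habs1, habs2, habs3, habs4]
  constructor <;> nlinarith

/-- for fBM with `H ∈ (0,1/2]` and `[u,v] ⊆ [s,t]` one has
`|E(B_{u,v} B_{s,t})| ≤ 2 c_H (v-u)^{2H}` (with `c_H = 1/2`), and consequently for any
dissection `(t_i)` of `[s,t]`, `Σ_i |E(B_{t_i,t_{i+1}} B_{s,t})|^{1/(2H)} ≤ C_H |t-s|`.
Here `E(B_{a,b} B_{c,d})` is the rectangular increment of the covariance. -/
theorem stmt_6 (H : ℝ) (hH0 : 0 < H) (hH : H ≤ 1 / 2) :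
    (∀ s u v t : ℝ, 0 ≤ s → s ≤ u → u ≤ v → v ≤ t →
      |rectInc (fbmCov H) u v s t| ≤ 2 * (1 / 2) * (v - u) ^ (2 * H)) ∧
    ∃ C : ℝ, 0 < C ∧
      ∀ (s t : ℝ), 0 ≤ s → s ≤ t →
        ∀ (n : ℕ) (P : Fin (n + 1) → ℝ), IsDissection s t P →
          (∑ i : Fin n, |rectInc (fbmCov H) (P i.castSucc) (P i.succ) s t| ^ (1 / (2 * H)))
            ≤ C * (t - s) := by
  constructor
  · intro s u v t hs hsu huv hvt
    obtain ⟨h0, h1⟩ := key_bound H hH0 hH s u v t hs hsu huv hvt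
    rw [abs_of_nonneg h0]
    calc rectInc (fbmCov H) u v s t ≤ (v - u) ^ (2 * H) := h1
      _ = 2 * (1 / 2) * (v - u) ^ (2 * H) := by ring
  · refine ⟨1, one_pos, fun s t hs hst n P hP => ?_⟩
    obtain ⟨hmono, hP0, hPl⟩ := hP
    have step : ∀ i : Fin n,
        |rectInc (fbmCov H) (P i.castSucc) (P i.succ) s t| ^ (1 / (2 * H))
          ≤ P i.succ - P i.castSucc := by
      intro i
      have h1 : s ≤ P i.castSucc := hP0 ▸ hmono (Fin.zero_le _)
      have h2 : P i.castSucc ≤ P i.succ := hmono (Fin.castSucc_le_succ i)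
      have h3 : P i.succ ≤ t := hPl ▸ hmono (Fin.le_last _)
      obtain ⟨h0, hle⟩ := key_bound H hH0 hH s (P i.castSucc) (P i.succ) t hs h1 h2 h3
      rw [abs_of_nonneg h0]
      have hd : 0 ≤ P i.succ - P i.castSucc := by linarith
      have hq : (0:ℝ) ≤ 1 / (2 * H) := by positivity
      calc rectInc (fbmCov H) (P i.castSucc) (P i.succ) s t ^ (1 / (2 * H))
          ≤ ((P i.succ - P i.castSucc) ^ (2 * H)) ^ (1 / (2 * H)) :=
            Real.rpow_le_rpow h0 hle hq
        _ = P i.succ - P i.castSucc := by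
            rw [← Real.rpow_mul hd, mul_one_div, div_self (by positivity : (2*H) ≠ 0),
              Real.rpow_one]
    calc (∑ i : Fin n, |rectInc (fbmCov H) (P i.castSucc) (P i.succ) s t| ^ (1 / (2 * H)))
        ≤ ∑ i : Fin n, (P i.succ - P i.castSucc) := Finset.sum_le_sum fun i _ => step i
      _ = P (Fin.last n) - P 0 := telescope_fin P
      _ = 1 * (t - s) := by rw [hP0, hPl]; ring
end

section
/- Let X be a centered real-valued continuous Gaussian process on [0,1] with covariance R of finite 2D ρ-variation, and let H be its Cameron–Martin (reproducing kernel Hilbert) space. Then every h ∈ H has finite ρ-variation, and |h|_{ρ-var;[s,t]} ≤ √⟨h,h⟩_H · √(|R|_{ρ-var;[s,t]²}) for all s < t. -/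
open MeasureTheory ProbabilityTheory

section Helpers


variable {Ω : Type*} [MeasurableSpace Ω] {μ : Measure Ω}

lemma l2_mul_integrable {f g : Ω → ℝ} (hf : MemLp f 2 μ) (hg : MemLp g 2 μ) :
    Integrable (fun ω => f ω * g ω) μ := by
  have h : MemLp (f • g) 1 μ := hg.smul hf (hpqr := ⟨by rw [ENNReal.inv_two_add_inv_two, inv_one]⟩)
  have := memLp_one_iff_integrable.mp h
  exact this

lemma integral_mul_le_sqrt {f g : Ω → ℝ} (hf : MemLp f 2 μ) (hg : MemLp g 2 μ) :
    ∫ ω, f ω * g ω ∂μ ≤ Real.sqrt (∫ ω, f ω ^ 2 ∂μ) * Real.sqrt (∫ ω, g ω ^ 2 ∂μ) := by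
  set F := hf.toLp f
  set G := hg.toLp g
  have hinner : ∀ (u v : Ω → ℝ) (hu : MemLp u 2 μ) (hv : MemLp v 2 μ),
      (inner ℝ (hu.toLp u) (hv.toLp v) : ℝ) = ∫ ω, u ω * v ω ∂μ := by
    intro u v hu hv
    rw [MeasureTheory.L2.inner_def]
    apply integral_congr_ae
    filter_upwards [hu.coeFn_toLp, hv.coeFn_toLp] with ω h1 h2
    simp [h1, h2, RCLike.inner_apply, mul_comm]
  have hF : Real.sqrt (∫ ω, f ω ^ 2 ∂μ) = ‖F‖ := by
    rw [show (∫ ω, f ω ^ 2 ∂μ) = ∫ ω, f ω * f ω ∂μ by simp [sq],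
      ← hinner f f hf hf, real_inner_self_eq_norm_mul_norm,
      Real.sqrt_mul_self (norm_nonneg _)]
  have hG : Real.sqrt (∫ ω, g ω ^ 2 ∂μ) = ‖G‖ := by
    rw [show (∫ ω, g ω ^ 2 ∂μ) = ∫ ω, g ω * g ω ∂μ by simp [sq],
      ← hinner g g hg hg, real_inner_self_eq_norm_mul_norm,
      Real.sqrt_mul_self (norm_nonneg _)]
  rw [← hinner f g hf hg, hF, hG]
  exact real_inner_le_norm F G

lemma beta_mul_self {ρ x : ℝ} (hρ : 1 ≤ ρ) : (|x| ^ (ρ - 2) * x) * x = |x| ^ ρ := by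
  rcases eq_or_ne x 0 with rfl | hx
  · simp [Real.zero_rpow (by positivity : ρ ≠ 0)]
  · have hax : (0:ℝ) < |x| := abs_pos.mpr hx
    have h2 : x * x = |x| ^ (2:ℝ) := by
      rw [show (2:ℝ) = ((2:ℕ):ℝ) by norm_num, Real.rpow_natCast, sq_abs, sq]
    rw [mul_assoc, h2, ← Real.rpow_add hax]
    norm_num

lemma abs_beta_le {ρ x : ℝ} (hρ : 1 ≤ ρ) : |(|x| ^ (ρ - 2) * x)| ≤ |x| ^ (ρ - 1) := by
  rcases eq_or_ne x 0 with rfl | hx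
  · simp [Real.rpow_nonneg]
  · have hax : (0:ℝ) < |x| := abs_pos.mpr hx
    rw [abs_mul, abs_of_nonneg (Real.rpow_nonneg (abs_nonneg x) _)]
    refine le_of_eq ?_
    rw [← Real.rpow_add_one hax.ne' (ρ-2)]
    ring_nf

lemma holder_step {n : ℕ} {ρ : ℝ} (hρ : 1 ≤ ρ) (d : Fin n → ℝ) (R : Fin n → Fin n → ℝ)
    (hd : ∀ i, 0 ≤ d i) :
    ∑ i, ∑ j, (d i ^ (ρ-1) * d j ^ (ρ-1)) * |R i j| ≤
      (∑ i, d i ^ ρ) ^ (2*(1 - ρ⁻¹)) * (∑ i, ∑ j, |R i j| ^ ρ) ^ ρ⁻¹ := by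
  rcases eq_or_lt_of_le hρ with rfl | h1
  · simp [Real.rpow_one, Real.rpow_zero]
  · have hρ0 : (0:ℝ) < ρ := by linarith
    have hne : ρ - 1 ≠ 0 := by linarith
    have hpq : (ρ/(ρ-1)).HolderConjugate ρ :=
      ((Real.holderConjugate_iff_eq_conjExponent h1).mpr rfl).symm
    set S := ∑ i, d i ^ ρ with hS
    have hS0 : 0 ≤ S := Finset.sum_nonneg fun i _ => Real.rpow_nonneg (hd i) _
    have key := Real.inner_le_Lp_mul_Lq_of_nonneg (s := (Finset.univ : Finset (Fin n × Fin n)))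
      hpq (f := fun ij : Fin n × Fin n => d ij.1 ^ (ρ-1) * d ij.2 ^ (ρ-1))
      (g := fun ij : Fin n × Fin n => |R ij.1 ij.2|)
      (fun i _ => mul_nonneg (Real.rpow_nonneg (hd _) _) (Real.rpow_nonneg (hd _) _))
      (fun i _ => abs_nonneg _)
    simp only [Fintype.sum_prod_type] at key
    have hexp : (ρ - 1) * (ρ/(ρ-1)) = ρ := by field_simp
    have e2 : ∑ i, ∑ j, (d i ^ (ρ-1) * d j ^ (ρ-1)) ^ (ρ/(ρ-1)) = S * S := by
      rw [hS, Finset.sum_mul_sum]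
      refine Finset.sum_congr rfl fun i _ => Finset.sum_congr rfl fun j _ => ?_
      rw [Real.mul_rpow (Real.rpow_nonneg (hd _) _) (Real.rpow_nonneg (hd _) _),
        ← Real.rpow_mul (hd i), ← Real.rpow_mul (hd j), hexp]
    rw [e2] at key
    have e3 : (S * S) ^ (1/(ρ/(ρ-1))) = S ^ (2*(1-ρ⁻¹)) := by
      have hmul : S * S = S ^ (2:ℝ) := by
        rw [show (2:ℝ) = ((2:ℕ):ℝ) by norm_num, Real.rpow_natCast]; ring
      have hinv : 1/(ρ/(ρ-1)) = 1 - ρ⁻¹ := by field_simp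
      rw [hmul, ← Real.rpow_mul hS0, hinv]
    rw [e3, one_div] at key
    exact key

lemma isDissection_pair {s t : ℝ} (hst : s ≤ t) : IsDissection s t ![s, t] := by
  refine ⟨Fin.monotone_iff_le_succ.mpr ?_, rfl, rfl⟩
  intro i
  fin_cases i
  simpa using hst

def extD {n : ℕ} (P : Fin (n + 1) → ℝ) : Fin (n + 2 + 1) → ℝ := fun j =>
  if h0 : (j : ℕ) = 0 then 0
  else if h2 : (j : ℕ) = n + 2 then 1
  else P ⟨(j : ℕ) - 1, by have := j.isLt; omega⟩

lemma extD_diss {n : ℕ} {P : Fin (n + 1) → ℝ} {s t : ℝ} (hs : 0 ≤ s) (ht : t ≤ 1)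
    (hP : IsDissection s t P) : IsDissection 0 1 (extD P) := by
  obtain ⟨hmono, hP0, hPl⟩ := hP
  refine ⟨Fin.monotone_iff_le_succ.mpr ?_, ?_, ?_⟩
  · intro i
    have hi := i.isLt
    simp only [extD, Fin.coe_castSucc, Fin.val_succ]
    split_ifs
    all_goals first
      | contradiction
      | omega
      | exact le_refl _
      | exact zero_le_one
      | exact hs.trans (by rw [← hP0]; exact hmono (Fin.zero_le _))
      | exact ((by rw [← hPl]; exact hmono (Fin.le_last _)) : P _ ≤ t).trans ht
      | (apply hmono; simp only [Fin.le_def]; omega)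
  · simp only [extD]
    rw [dif_pos (by simp)]
  · simp only [extD]
    rw [dif_neg (by simp [Fin.val_last]), dif_pos (by simp [Fin.val_last])]

lemma extD_eval1 {n : ℕ} (P : Fin (n + 1) → ℝ) (i : Fin n) :
    extD P ((i.succ.castSucc : Fin (n + 2)).castSucc) = P i.castSucc := by
  have hi := i.isLt
  simp only [extD, Fin.coe_castSucc, Fin.val_succ]
  rw [dif_neg (by omega), dif_neg (by omega)]
  refine congrArg P (Fin.ext ?_)
  simp only [Fin.coe_castSucc, Fin.val_succ]
  omega

lemma extD_eval2 {n : ℕ} (P : Fin (n + 1) → ℝ) (i : Fin n) :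
    extD P ((i.succ.castSucc : Fin (n + 2)).succ) = P i.succ := by
  have hi := i.isLt
  simp only [extD, Fin.coe_castSucc, Fin.val_succ]
  rw [dif_neg (by omega), dif_neg (by omega)]
  refine congrArg P (Fin.ext ?_)
  simp only [Fin.coe_castSucc, Fin.val_succ]
  omega

lemma embed_sum_le {n m : ℕ} (g : Fin (n + 2) → Fin (m + 2) → ℝ) (hg : ∀ i j, 0 ≤ g i j) :
    ∑ i : Fin n, ∑ j : Fin m, g i.succ.castSucc j.succ.castSucc ≤ ∑ i, ∑ j, g i j := by
  have emb : ∀ k : ℕ, Function.Injective (fun i : Fin k => (i.succ.castSucc : Fin (k + 2))) := by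
    intro k a b hab
    simpa [Fin.castSucc_inj, Fin.succ_inj] using hab
  have one : ∀ (k : ℕ) (F : Fin (k + 2) → ℝ), (∀ x, 0 ≤ F x) →
      ∑ i : Fin k, F i.succ.castSucc ≤ ∑ x, F x := by
    intro k F hF
    classical
    calc ∑ i : Fin k, F i.succ.castSucc
        = ∑ x ∈ Finset.univ.map ⟨fun i : Fin k => (i.succ.castSucc : Fin (k + 2)), emb k⟩, F x := by
          rw [Finset.sum_map]; rfl
      _ ≤ ∑ x, F x :=
          Finset.sum_le_sum_of_subset_of_nonneg (Finset.subset_univ _) (fun x _ _ => hF x)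
  calc ∑ i : Fin n, ∑ j : Fin m, g i.succ.castSucc j.succ.castSucc
      ≤ ∑ i : Fin n, ∑ j' : Fin (m + 2), g i.succ.castSucc j' :=
        Finset.sum_le_sum fun i _ => one m (fun j' => g i.succ.castSucc j') (fun _ => hg _ _)
    _ = ∑ j' : Fin (m + 2), ∑ i : Fin n, g i.succ.castSucc j' := Finset.sum_comm
    _ ≤ ∑ j' : Fin (m + 2), ∑ i' : Fin (n + 2), g i' j' :=
        Finset.sum_le_sum fun j' _ => one n (fun i' => g i' j') (fun _ => hg _ _)
    _ = ∑ i', ∑ j', g i' j' := Finset.sum_comm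

lemma restrict_le_sSup (f : ℝ → ℝ → ℝ) (ρ : ℝ) {s t : ℝ} (hs : 0 ≤ s) (ht : t ≤ 1)
    (hfin : BddAbove (varSums2D f ρ 0 1 0 1)) :
    ∀ x ∈ varSums2D f ρ s t s t, x ≤ sSup (varSums2D f ρ 0 1 0 1) := by
  rintro x ⟨n, m, P, Q, hP, hQ, rfl⟩
  have key : (∑ i : Fin n, ∑ j : Fin m,
        ‖rectInc f (P i.castSucc) (P i.succ) (Q j.castSucc) (Q j.succ)‖ ^ ρ)
      ≤ ∑ i : Fin (n + 2), ∑ j : Fin (m + 2),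
        ‖rectInc f ((extD P) i.castSucc) ((extD P) i.succ)
          ((extD Q) j.castSucc) ((extD Q) j.succ)‖ ^ ρ := by
    refine le_trans (le_of_eq ?_)
      (embed_sum_le (fun i j => ‖rectInc f ((extD P) i.castSucc) ((extD P) i.succ)
        ((extD Q) j.castSucc) ((extD Q) j.succ)‖ ^ ρ)
        (fun i j => Real.rpow_nonneg (norm_nonneg _) _))
    refine Finset.sum_congr rfl fun i _ => Finset.sum_congr rfl fun j _ => ?_
    simp only [extD_eval1, extD_eval2]
  refine key.trans (le_csSup hfin ?_)
  exact ⟨n + 2, m + 2, extD P, extD Q, extD_diss hs ht hP, extD_diss hs ht hQ, rfl⟩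

lemma core_lemma {Ω : Type*} [MeasurableSpace Ω] (μ : Measure Ω) [IsProbabilityMeasure μ]
    (X : ℝ → Ω → ℝ) (Z : Ω → ℝ) (ρ : ℝ) (hρ : 1 ≤ ρ)
    (hXL2 : ∀ t, MemLp (X t) 2 μ) (hZL2 : MemLp Z 2 μ)
    {n : ℕ} (P : Fin (n+1) → ℝ) :
    (∑ i : Fin n, ‖(∫ ω, Z ω * X (P i.succ) ω ∂μ) - ∫ ω, Z ω * X (P i.castSucc) ω ∂μ‖ ^ ρ) ^ ρ⁻¹
      ≤ Real.sqrt (∫ ω, Z ω ^ 2 ∂μ) *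
        (∑ i : Fin n, ∑ j : Fin n, ‖rectInc (fun a b => ∫ ω, X a ω * X b ω ∂μ)
            (P i.castSucc) (P i.succ) (P j.castSucc) (P j.succ)‖ ^ ρ) ^ (2*ρ)⁻¹ := by
  have hρ0 : (0:ℝ) < ρ := lt_of_lt_of_le one_pos hρ
  set A := Real.sqrt (∫ ω, Z ω ^ 2 ∂μ) with hA
  have hA0 : 0 ≤ A := Real.sqrt_nonneg _
  set dh : Fin n → ℝ :=
    fun i => (∫ ω, Z ω * X (P i.succ) ω ∂μ) - ∫ ω, Z ω * X (P i.castSucc) ω ∂μ with hdhdef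
  set β : Fin n → ℝ := fun i => |dh i| ^ (ρ - 2) * dh i with hβ
  set Δ : Fin n → Ω → ℝ := fun i ω => X (P i.succ) ω - X (P i.castSucc) ω with hΔ
  have hΔL2 : ∀ i, MemLp (Δ i) 2 μ := fun i => (hXL2 _).sub (hXL2 _)
  set Rij : Fin n → Fin n → ℝ := fun i j => rectInc (fun a b => ∫ ω, X a ω * X b ω ∂μ)
      (P i.castSucc) (P i.succ) (P j.castSucc) (P j.succ) with hRijdef
  set S := ∑ i : Fin n, |dh i| ^ ρ with hSdef
  set M := ∑ i : Fin n, ∑ j : Fin n, |Rij i j| ^ ρ with hMdef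
  have hS0 : 0 ≤ S := Finset.sum_nonneg fun i _ => Real.rpow_nonneg (abs_nonneg _) _
  have hM0 : 0 ≤ M := Finset.sum_nonneg fun i _ =>
    Finset.sum_nonneg fun j _ => Real.rpow_nonneg (abs_nonneg _) _
  -- reduce goal to S, M form
  simp only [Real.norm_eq_abs]
  rw [show (∑ i : Fin n, |(∫ ω, Z ω * X (P i.succ) ω ∂μ) -
      ∫ ω, Z ω * X (P i.castSucc) ω ∂μ| ^ ρ) = S from rfl,
    show (∑ i : Fin n, ∑ j : Fin n, |Rij i j| ^ ρ) = M from rfl]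
  set Y : Ω → ℝ := fun ω => ∑ i : Fin n, β i * Δ i ω with hY
  have hYL2 : MemLp Y 2 μ :=
    memLp_finset_sum Finset.univ (fun i _ => (hΔL2 i).const_mul (β i))
  have hdh : ∀ i, dh i = ∫ ω, Z ω * Δ i ω ∂μ := by
    intro i
    have h1 : Integrable (fun ω => Z ω * X (P i.succ) ω) μ := l2_mul_integrable hZL2 (hXL2 _)
    have h2 : Integrable (fun ω => Z ω * X (P i.castSucc) ω) μ := l2_mul_integrable hZL2 (hXL2 _)
    rw [show dh i = (∫ ω, Z ω * X (P i.succ) ω ∂μ) - ∫ ω, Z ω * X (P i.castSucc) ω ∂μ from rfl,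
      ← integral_sub h1 h2]
    congr 1; funext ω; simp only [hΔ]; ring
  -- Step A : S = ∫ Z Y
  have stepA : S = ∫ ω, Z ω * Y ω ∂μ := by
    have e1 : ∀ ω, Z ω * Y ω = ∑ i : Fin n, β i * (Z ω * Δ i ω) := by
      intro ω; rw [hY, Finset.mul_sum]; refine Finset.sum_congr rfl fun i _ => by ring
    calc S = ∑ i : Fin n, β i * dh i := by
            refine Finset.sum_congr rfl fun i _ => (beta_mul_self hρ).symm
      _ = ∑ i : Fin n, ∫ ω, β i * (Z ω * Δ i ω) ∂μ := by
            refine Finset.sum_congr rfl fun i _ => ?_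
            rw [integral_const_mul, ← hdh i]
      _ = ∫ ω, ∑ i : Fin n, β i * (Z ω * Δ i ω) ∂μ := by
            rw [integral_finset_sum]
            exact fun i _ => (l2_mul_integrable hZL2 (hΔL2 i)).const_mul (β i)
      _ = ∫ ω, Z ω * Y ω ∂μ := by simp_rw [e1]
  -- Step C : ∫ Y² = ∑∑ β i β j Rij
  have hRint : ∀ (a b : ℝ), Integrable (fun ω => X a ω * X b ω) μ :=
    fun a b => l2_mul_integrable (hXL2 a) (hXL2 b)
  have hRij : ∀ i j, (∫ ω, Δ i ω * Δ j ω ∂μ) = Rij i j := by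
    intro i j
    have e : (fun ω => Δ i ω * Δ j ω) = fun ω =>
        ((X (P i.castSucc) ω * X (P j.castSucc) ω + X (P i.succ) ω * X (P j.succ) ω)
          - X (P i.castSucc) ω * X (P j.succ) ω) - X (P i.succ) ω * X (P j.castSucc) ω := by
      funext ω; simp [hΔ]; ring
    have hI1 : Integrable (fun ω => X (P i.castSucc) ω * X (P j.castSucc) ω +
        X (P i.succ) ω * X (P j.succ) ω) μ := (hRint _ _).add (hRint _ _)
    have hI2 : Integrable (fun ω => (X (P i.castSucc) ω * X (P j.castSucc) ω +
        X (P i.succ) ω * X (P j.succ) ω) - X (P i.castSucc) ω * X (P j.succ) ω) μ :=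
      hI1.sub (hRint _ _)
    rw [e, integral_sub hI2 (hRint _ _), integral_sub hI1 (hRint _ _),
      integral_add (hRint _ _) (hRint _ _)]
    simp only [hRijdef, rectInc]
  have stepC : (∫ ω, Y ω ^ 2 ∂μ) = ∑ i : Fin n, ∑ j : Fin n, (β i * β j) * Rij i j := by
    have e1 : ∀ ω, Y ω ^ 2 = ∑ i : Fin n, ∑ j : Fin n, (β i * β j) * (Δ i ω * Δ j ω) := by
      intro ω
      rw [hY, sq, Finset.sum_mul_sum]
      exact Finset.sum_congr rfl fun i _ => Finset.sum_congr rfl fun j _ => by ring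
    simp_rw [e1]
    rw [integral_finset_sum _ (fun i _ => integrable_finset_sum _ (fun j _ =>
      (l2_mul_integrable (hΔL2 i) (hΔL2 j)).const_mul _))]
    refine Finset.sum_congr rfl fun i _ => ?_
    rw [integral_finset_sum _ (fun j _ => (l2_mul_integrable (hΔL2 i) (hΔL2 j)).const_mul _)]
    refine Finset.sum_congr rfl fun j _ => ?_
    rw [integral_const_mul, hRij]
  -- Step D : Hölder
  have stepD : ∑ i : Fin n, ∑ j : Fin n, (β i * β j) * Rij i j ≤
      S ^ (2*(1 - ρ⁻¹)) * M ^ ρ⁻¹ := by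
    have h1 : ∑ i : Fin n, ∑ j : Fin n, (β i * β j) * Rij i j ≤
        ∑ i : Fin n, ∑ j : Fin n, (|dh i| ^ (ρ-1) * |dh j| ^ (ρ-1)) * |Rij i j| := by
      refine Finset.sum_le_sum fun i _ => Finset.sum_le_sum fun j _ => ?_
      calc (β i * β j) * Rij i j ≤ |(β i * β j) * Rij i j| := le_abs_self _
        _ = |β i| * |β j| * |Rij i j| := by rw [abs_mul, abs_mul]
        _ ≤ (|dh i| ^ (ρ-1) * |dh j| ^ (ρ-1)) * |Rij i j| := by
            have bi := abs_beta_le (x := dh i) hρ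
            have bj := abs_beta_le (x := dh j) hρ
            have hmm : |β i| * |β j| ≤ |dh i| ^ (ρ-1) * |dh j| ^ (ρ-1) :=
              mul_le_mul bi bj (abs_nonneg _) (Real.rpow_nonneg (abs_nonneg _) _)
            exact mul_le_mul_of_nonneg_right hmm (abs_nonneg _)
    refine h1.trans ?_
    have := holder_step hρ (fun i => |dh i|) Rij (fun i => abs_nonneg _)
    simpa [hSdef, hMdef] using this
  -- combine
  have big : S ≤ A * (S ^ (1 - ρ⁻¹) * M ^ (2*ρ)⁻¹) := by
    have hY2 : (∫ ω, Z ω * Y ω ∂μ) ≤ A * Real.sqrt (∫ ω, Y ω ^ 2 ∂μ) := by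
      rw [hA]; exact integral_mul_le_sqrt hZL2 hYL2
    have hsq : Real.sqrt (∫ ω, Y ω ^ 2 ∂μ) ≤ S ^ (1 - ρ⁻¹) * M ^ (2*ρ)⁻¹ := by
      rw [stepC]
      refine (Real.sqrt_le_sqrt stepD).trans (le_of_eq ?_)
      rw [Real.sqrt_mul (Real.rpow_nonneg hS0 _), Real.sqrt_eq_rpow, Real.sqrt_eq_rpow,
        ← Real.rpow_mul hS0, ← Real.rpow_mul hM0,
        show 2*(1-ρ⁻¹)*(1/2) = 1-ρ⁻¹ by ring,
        show ρ⁻¹*(1/2) = (2*ρ)⁻¹ by rw [mul_inv]; ring]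
    calc S = ∫ ω, Z ω * Y ω ∂μ := stepA
      _ ≤ A * Real.sqrt (∫ ω, Y ω ^ 2 ∂μ) := hY2
      _ ≤ A * (S ^ (1 - ρ⁻¹) * M ^ (2*ρ)⁻¹) := by
          exact mul_le_mul_of_nonneg_left hsq hA0
  rcases eq_or_lt_of_le hS0 with hS | hSpos
  · rw [← hS, Real.zero_rpow (inv_ne_zero hρ0.ne')]
    exact mul_nonneg hA0 (Real.rpow_nonneg hM0 _)
  · have hcancel : S ^ ρ⁻¹ * S ^ (1 - ρ⁻¹) ≤ (A * M ^ (2*ρ)⁻¹) * S ^ (1 - ρ⁻¹) := by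
      have : S ^ ρ⁻¹ * S ^ (1 - ρ⁻¹) = S := by
        rw [← Real.rpow_add hSpos]; norm_num
      rw [this]
      calc S ≤ A * (S ^ (1 - ρ⁻¹) * M ^ (2*ρ)⁻¹) := big
        _ = (A * M ^ (2*ρ)⁻¹) * S ^ (1 - ρ⁻¹) := by ring
    exact le_of_mul_le_mul_right hcancel (Real.rpow_pos_of_pos hSpos _)

end Helpers

/-- Cameron–Martin embedding: let `X` be a centered continuous Gaussian
process on `[0,1]` with covariance `R(a,b) = E(X_a X_b)` of finite 2D `ρ`-variation, and
let `h_t = E(Z X_t)` be a Cameron–Martin path (`Z` a Gaussian random variable measurable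
with respect to `σ(X_t, t ∈ [0,1])`). Then `h` has finite `ρ`-variation with
`|h|_{ρ-var;[s,t]} ≤ √⟨h,h⟩_H √(|R|_{ρ-var;[s,t]²})`, where `⟨h,h⟩_H = E(Z²)`. -/
theorem stmt_8 {Ω : Type*} [MeasurableSpace Ω] (μ : Measure Ω) [IsProbabilityMeasure μ]
    (X : ℝ → Ω → ℝ) (Z : Ω → ℝ) (ρ : ℝ) (hρ : 1 ≤ ρ)
    -- centered jointly Gaussian process with continuous sample paths
    (hGauss : ∀ (k : ℕ) (c : Fin k → ℝ) (ts : Fin k → ℝ),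
      ∃ v : NNReal, μ.map (fun ω => ∑ i, c i * X (ts i) ω) = gaussianReal 0 v)
    (hmeas : ∀ t, Measurable (X t))
    (hcont : ∀ ω, ContinuousOn (fun t => X t ω) (Set.Icc 0 1))
    (hXL2 : ∀ t, MemLp (X t) 2 μ)
    -- `Z` is Gaussian and measurable with respect to the σ-algebra generated by `X`
    (hZGauss : ∃ v : NNReal, μ.map Z = gaussianReal 0 v)
    (hZmeas : @Measurable Ω ℝ
      (⨆ t ∈ Set.Icc (0:ℝ) 1, MeasurableSpace.comap (X t) inferInstance) _ Z)
    (hZL2 : MemLp Z 2 μ)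
    -- the covariance has finite 2D ρ-variation
    (hfin : BddAbove (varSums2D (fun a b => ∫ ω, X a ω * X b ω ∂μ) ρ 0 1 0 1)) :
    ∀ s t, 0 ≤ s → s ≤ t → t ≤ 1 →
      BddAbove (varSums1D (fun u => ∫ ω, Z ω * X u ω ∂μ) ρ s t) ∧
      (sSup (varSums1D (fun u => ∫ ω, Z ω * X u ω ∂μ) ρ s t)) ^ ρ⁻¹ ≤
        Real.sqrt (∫ ω, Z ω ^ 2 ∂μ) *
          Real.sqrt ((sSup (varSums2D (fun a b => ∫ ω, X a ω * X b ω ∂μ) ρ s t s t)) ^ ρ⁻¹) := by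
  intro s t hs hst ht
  have hρ0 : (0:ℝ) < ρ := lt_of_lt_of_le one_pos hρ
  clear hGauss hmeas hcont hZGauss hZmeas
  set c : ℝ → ℝ → ℝ := fun a b => ∫ ω, X a ω * X b ω ∂μ with hc
  have bdd2 : BddAbove (varSums2D c ρ s t s t) :=
    ⟨sSup (varSums2D c ρ 0 1 0 1), fun x hx => restrict_le_sSup c ρ hs ht hfin x hx⟩
  have mem2 : (∑ i : Fin 1, ∑ j : Fin 1, ‖rectInc c ((![s,t]) i.castSucc) ((![s,t]) i.succ)
      ((![s,t]) j.castSucc) ((![s,t]) j.succ)‖ ^ ρ) ∈ varSums2D c ρ s t s t :=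
    ⟨1, 1, ![s,t], ![s,t], isDissection_pair hst, isDissection_pair hst, rfl⟩
  have hsup2 : 0 ≤ sSup (varSums2D c ρ s t s t) :=
    le_trans (Finset.sum_nonneg fun i _ => Finset.sum_nonneg fun j _ =>
      Real.rpow_nonneg (norm_nonneg _) _) (le_csSup bdd2 mem2)
  set A := Real.sqrt (∫ ω, Z ω ^ 2 ∂μ) with hA
  have hA0 : 0 ≤ A := Real.sqrt_nonneg _
  set V := sSup (varSums2D c ρ s t s t) with hV
  have hVK : V ^ (2*ρ)⁻¹ = Real.sqrt (V ^ ρ⁻¹) := by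
    rw [Real.sqrt_eq_rpow, ← Real.rpow_mul hsup2,
      show ρ⁻¹ * (1/2) = (2*ρ)⁻¹ by rw [mul_inv]; ring]
  set K := A * Real.sqrt (V ^ ρ⁻¹) with hK
  have hK0 : 0 ≤ K := mul_nonneg hA0 (Real.sqrt_nonneg _)
  have claim : ∀ y ∈ varSums1D (fun u => ∫ ω, Z ω * X u ω ∂μ) ρ s t, 0 ≤ y ∧ y ^ ρ⁻¹ ≤ K := by
    rintro y ⟨n, P, hP, rfl⟩
    constructor
    · exact Finset.sum_nonneg fun i _ => Real.rpow_nonneg (norm_nonneg _) _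
    · have hcore := core_lemma μ X Z ρ hρ hXL2 hZL2 P
      have hM0 : 0 ≤ ∑ i : Fin n, ∑ j : Fin n, ‖rectInc c (P i.castSucc) (P i.succ)
          (P j.castSucc) (P j.succ)‖ ^ ρ :=
        Finset.sum_nonneg fun i _ => Finset.sum_nonneg fun j _ =>
          Real.rpow_nonneg (norm_nonneg _) _
      have hMmem : (∑ i : Fin n, ∑ j : Fin n, ‖rectInc c (P i.castSucc) (P i.succ)
          (P j.castSucc) (P j.succ)‖ ^ ρ) ∈ varSums2D c ρ s t s t :=
        ⟨n, n, P, P, hP, hP, rfl⟩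
      have hMle : (∑ i : Fin n, ∑ j : Fin n, ‖rectInc c (P i.castSucc) (P i.succ)
          (P j.castSucc) (P j.succ)‖ ^ ρ) ≤ V := le_csSup bdd2 hMmem
      calc ((∑ i : Fin n, ‖(fun u => ∫ ω, Z ω * X u ω ∂μ) (P i.succ) -
              (fun u => ∫ ω, Z ω * X u ω ∂μ) (P i.castSucc)‖ ^ ρ)) ^ ρ⁻¹
          ≤ A * (∑ i : Fin n, ∑ j : Fin n, ‖rectInc c (P i.castSucc) (P i.succ)
              (P j.castSucc) (P j.succ)‖ ^ ρ) ^ (2*ρ)⁻¹ := hcore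
        _ ≤ A * V ^ (2*ρ)⁻¹ := by
            refine mul_le_mul_of_nonneg_left
              (Real.rpow_le_rpow hM0 hMle (inv_nonneg.mpr (by linarith))) hA0
        _ = K := by rw [hK, hVK]
  have bdd1 : BddAbove (varSums1D (fun u => ∫ ω, Z ω * X u ω ∂μ) ρ s t) := by
    refine ⟨K ^ ρ, fun y hy => ?_⟩
    obtain ⟨hy0, hyK⟩ := claim y hy
    calc y = (y ^ ρ⁻¹) ^ ρ := (Real.rpow_inv_rpow hy0 hρ0.ne').symm
      _ ≤ K ^ ρ := Real.rpow_le_rpow (Real.rpow_nonneg hy0 _) hyK hρ0.le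
  refine ⟨bdd1, ?_⟩
  have h1 : sSup (varSums1D (fun u => ∫ ω, Z ω * X u ω ∂μ) ρ s t) ≤ K ^ ρ := by
    refine Real.sSup_le (fun y hy => ?_) (Real.rpow_nonneg hK0 _)
    obtain ⟨hy0, hyK⟩ := claim y hy
    calc y = (y ^ ρ⁻¹) ^ ρ := (Real.rpow_inv_rpow hy0 hρ0.ne').symm
      _ ≤ K ^ ρ := Real.rpow_le_rpow (Real.rpow_nonneg hy0 _) hyK hρ0.le
  have mem1 : (∑ i : Fin 1, ‖(fun u => ∫ ω, Z ω * X u ω ∂μ) ((![s,t]) i.succ) -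
      (fun u => ∫ ω, Z ω * X u ω ∂μ) ((![s,t]) i.castSucc)‖ ^ ρ) ∈
      varSums1D (fun u => ∫ ω, Z ω * X u ω ∂μ) ρ s t :=
    ⟨1, ![s,t], isDissection_pair hst, rfl⟩
  have h0 : 0 ≤ sSup (varSums1D (fun u => ∫ ω, Z ω * X u ω ∂μ) ρ s t) :=
    le_trans (Finset.sum_nonneg fun i _ => Real.rpow_nonneg (norm_nonneg _) _)
      (le_csSup bdd1 mem1)
  calc (sSup (varSums1D (fun u => ∫ ω, Z ω * X u ω ∂μ) ρ s t)) ^ ρ⁻¹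
      ≤ (K ^ ρ) ^ ρ⁻¹ := Real.rpow_le_rpow h0 h1 (inv_nonneg.mpr hρ0.le)
    _ = K := Real.rpow_rpow_inv hK0 hρ0.ne'
end

section
/- Let g, h ∈ G^N(ℝ^d) be elements of the free step-N nilpotent group, with Carnot–Carathéodory norm ‖·‖. Then there exists C = C(N,d) such that ‖g^{-1}⊗h⊗g‖ ≤ C max{‖h‖, ‖h‖^{1/N} ‖g‖^{1-1/N}}. -/
/-- The (step-`N` truncated) tensor algebra over `ℝ^d`, with tensors represented by
their coefficients on words in the letters `1,…,d`. -/
abbrev TTA (d : ℕ) := List (Fin d) → ℝ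

/-- Truncated tensor product: coefficients of words of length `> N` are discarded. -/
def ttaMul (N d : ℕ) (x y : TTA d) : TTA d := fun w =>
  if w.length ≤ N then ∑ i ∈ Finset.range (w.length + 1), x (w.take i) * y (w.drop i) else 0

/-- The unit `1` of the truncated tensor algebra. -/
def ttaOne (d : ℕ) : TTA d := fun w => if w = [] then 1 else 0

/-- The signature `exp(v)` of a single linear segment with increment `v ∈ ℝ^d`. -/
noncomputable def segExp (N d : ℕ) (v : EuclideanSpace ℝ (Fin d)) : TTA d := fun w =>
  if w.length ≤ N then (w.map fun a => v a).prod / (Nat.factorial w.length) else 0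

/-- The step-`N` signature of the piecewise linear path with successive increments `L`. -/
noncomputable def pwProd (N d : ℕ) (L : List (EuclideanSpace ℝ (Fin d))) : TTA d :=
  L.foldl (fun acc v => ttaMul N d acc (segExp N d v)) (ttaOne d)

/-- The free step-`N` nilpotent group `G^N(ℝ^d)`: signatures of piecewise linear
(equivalently, of bounded variation) paths. -/
def FreeNilpotent (N d : ℕ) : Set (TTA d) := { g | ∃ L, pwProd N d L = g }

/-- The representation of the inverse path: reversed, negated increments. -/
def invList {d : ℕ} (L : List (EuclideanSpace ℝ (Fin d))) :
    List (EuclideanSpace ℝ (Fin d)) := (L.map fun v => -v).reverse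

-- The group inverse in `G^N(ℝ^d)`.
open Classical in
noncomputable def ttaInv (N d : ℕ) (g : TTA d) : TTA d :=
  if h : ∃ L, pwProd N d L = g then pwProd N d (invList h.choose) else ttaOne d

/-- The Carnot–Carathéodory norm: the infimal length of a path whose signature is `g`. -/
noncomputable def ccNorm (N d : ℕ) (g : TTA d) : ℝ :=
  sInf { r | ∃ L, pwProd N d L = g ∧ r = (L.map fun v => ‖v‖).sum }

/-- The Carnot–Carathéodory distance `d(g,h) = ‖g⁻¹ ⊗ h‖`. -/
noncomputable def ccDist (N d : ℕ) (g h : TTA d) : ℝ :=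
  ccNorm N d (ttaMul N d (ttaInv N d g) h)

namespace S14

variable {N d : ℕ}

lemma ttaMul_apply (x y : TTA d) (w : List (Fin d)) (hw : w.length ≤ N) :
    ttaMul N d x y w = ∑ i ∈ Finset.range (w.length + 1), x (w.take i) * y (w.drop i) :=
  if_pos hw

lemma ttaMul_apply_gt (x y : TTA d) (w : List (Fin d)) (hw : ¬ w.length ≤ N) :
    ttaMul N d x y w = 0 := if_neg hw

lemma ttaOne_nil : ttaOne d [] = 1 := rfl

lemma ttaOne_ne (w : List (Fin d)) (hw : w ≠ []) : ttaOne d w = 0 := if_neg hw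

lemma ttaOne_pos (w : List (Fin d)) (hw : 0 < w.length) : ttaOne d w = 0 :=
  ttaOne_ne w (by rintro rfl; simp at hw)

lemma ttaMul_assoc (x y z : TTA d) :
    ttaMul N d (ttaMul N d x y) z = ttaMul N d x (ttaMul N d y z) := by
  funext w
  by_cases hw : w.length ≤ N
  · rw [ttaMul_apply _ _ _ hw, ttaMul_apply _ _ _ hw]
    set n := w.length with hn
    have LHS :
        (∑ j ∈ Finset.range (n + 1), ttaMul N d x y (w.take j) * z (w.drop j)) =
        ∑ j ∈ Finset.range (n + 1), ∑ i ∈ Finset.range (j + 1),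
          x (w.take i) * (y ((w.drop i).take (j - i)) * z (w.drop j)) := by
      refine Finset.sum_congr rfl fun j hj => ?_
      rw [Finset.mem_range] at hj
      have hjn : j ≤ n := Nat.lt_succ_iff.mp hj
      have h1 : (w.take j).length = j := by
        rw [List.length_take]; omega
      have hle : (w.take j).length ≤ N := by rw [h1]; omega
      rw [ttaMul_apply _ _ _ hle, h1, Finset.sum_mul]
      refine Finset.sum_congr rfl fun i hi => ?_
      rw [Finset.mem_range] at hi
      have hij : i ≤ j := Nat.lt_succ_iff.mp hi
      have e1 : (w.take j).take i = w.take i := by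
        rw [List.take_take]; congr 1; omega
      have e2 : (w.take j).drop i = (w.drop i).take (j - i) := by
        have hi2 : i + (j - i) = j := by omega
        rw [List.take_drop, hi2]
      rw [e1, e2, mul_assoc]
    have RHS :
        (∑ i ∈ Finset.range (n + 1), x (w.take i) * ttaMul N d y z (w.drop i)) =
        ∑ i ∈ Finset.range (n + 1), ∑ j ∈ Finset.Ico i (n + 1),
          x (w.take i) * (y ((w.drop i).take (j - i)) * z (w.drop j)) := by
      refine Finset.sum_congr rfl fun i hi => ?_
      rw [Finset.mem_range] at hi
      have hin : i ≤ n := Nat.lt_succ_iff.mp hi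
      have h1 : (w.drop i).length = n - i := by rw [List.length_drop]
      have hle : (w.drop i).length ≤ N := by rw [h1]; omega
      rw [ttaMul_apply _ _ _ hle, h1, Finset.mul_sum]
      rw [Finset.sum_Ico_eq_sum_range]
      have hreindex : n + 1 - i = n - i + 1 := by omega
      rw [hreindex]
      refine Finset.sum_congr rfl fun q hq => ?_
      rw [Finset.mem_range] at hq
      have e1 : i + q - i = q := by omega
      have e2 : (w.drop i).drop q = w.drop (i + q) := by
        rw [List.drop_drop]
      rw [e1, e2]
    rw [LHS, RHS]
    rw [Finset.range_eq_Ico, Finset.sum_Ico_Ico_comm 0 (n + 1)]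
    simp only [Finset.range_eq_Ico]
  · rw [ttaMul_apply_gt _ _ _ hw, ttaMul_apply_gt _ _ _ hw]

def Tr (N : ℕ) {d : ℕ} (x : TTA d) : Prop := ∀ w : List (Fin d), N < w.length → x w = 0

lemma tr_ttaMul (x y : TTA d) : Tr N (ttaMul N d x y) := fun w hw => if_neg (by omega)

lemma tr_segExp (v : EuclideanSpace ℝ (Fin d)) : Tr N (segExp N d v) := fun w hw => if_neg (by omega)

lemma tr_one : Tr N (ttaOne d) := fun w hw => ttaOne_pos w (by omega)

lemma ttaMul_one (x : TTA d) (hx : Tr N x) : ttaMul N d x (ttaOne d) = x := by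
  funext w
  by_cases hw : w.length ≤ N
  · rw [ttaMul_apply _ _ _ hw]
    rw [Finset.sum_eq_single_of_mem w.length (by simp)]
    · simp [ttaOne_nil]
    · intro i hi hne
      rw [Finset.mem_range] at hi
      have hne2 : w.drop i ≠ [] := by
        intro hcon
        have h2 : (w.drop i).length = 0 := by rw [hcon]; rfl
        rw [List.length_drop] at h2; omega
      rw [ttaOne_ne _ hne2, mul_zero]
  · rw [ttaMul_apply_gt _ _ _ hw, hx w (by omega)]

lemma one_ttaMul (x : TTA d) (hx : Tr N x) : ttaMul N d (ttaOne d) x = x := by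
  funext w
  by_cases hw : w.length ≤ N
  · rw [ttaMul_apply _ _ _ hw]
    rw [Finset.sum_eq_single_of_mem 0 (by simp)]
    · simp [ttaOne_nil]
    · intro i hi hne
      rw [Finset.mem_range] at hi
      have hne2 : w.take i ≠ [] := by
        intro hcon
        have h2 : (w.take i).length = 0 := by rw [hcon]; rfl
        rw [List.length_take] at h2; omega
      rw [ttaOne_ne _ hne2, zero_mul]
  · rw [ttaMul_apply_gt _ _ _ hw, hx w (by omega)]

lemma foldl_eq (B : List (EuclideanSpace ℝ (Fin d))) :
    ∀ x : TTA d, Tr N x →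
    List.foldl (fun acc v => ttaMul N d acc (segExp N d v)) x B = ttaMul N d x (pwProd N d B) := by
  induction B with
  | nil => intro x hx; simpa [pwProd] using (ttaMul_one x hx).symm
  | cons v B ih =>
    intro x hx
    have h1 : List.foldl (fun acc v => ttaMul N d acc (segExp N d v)) x (v :: B)
        = List.foldl (fun acc v => ttaMul N d acc (segExp N d v)) (ttaMul N d x (segExp N d v)) B := rfl
    rw [h1, ih _ (tr_ttaMul _ _)]
    have h2 : pwProd N d (v :: B)
        = List.foldl (fun acc v => ttaMul N d acc (segExp N d v)) (ttaMul N d (ttaOne d) (segExp N d v)) B := rfl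
    rw [h2, one_ttaMul _ (tr_segExp v), ih _ (tr_segExp v), ttaMul_assoc]

lemma tr_pwProd (L : List (EuclideanSpace ℝ (Fin d))) : Tr N (pwProd N d L) := by
  cases L with
  | nil => exact tr_one
  | cons v B =>
    have h2 : pwProd N d (v :: B)
        = List.foldl (fun acc v => ttaMul N d acc (segExp N d v)) (ttaMul N d (ttaOne d) (segExp N d v)) B := rfl
    rw [h2, foldl_eq _ _ (tr_ttaMul _ _)]
    exact tr_ttaMul _ _

lemma pwProd_cons (v : EuclideanSpace ℝ (Fin d)) (B : List (EuclideanSpace ℝ (Fin d))) :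
    pwProd N d (v :: B) = ttaMul N d (segExp N d v) (pwProd N d B) := by
  have h2 : pwProd N d (v :: B)
      = List.foldl (fun acc v => ttaMul N d acc (segExp N d v)) (ttaMul N d (ttaOne d) (segExp N d v)) B := rfl
  rw [h2, one_ttaMul _ (tr_segExp v), foldl_eq _ _ (tr_segExp v)]

lemma pwProd_append (A B : List (EuclideanSpace ℝ (Fin d))) :
    pwProd N d (A ++ B) = ttaMul N d (pwProd N d A) (pwProd N d B) := by
  have : pwProd N d (A ++ B)
      = List.foldl (fun acc v => ttaMul N d acc (segExp N d v)) (pwProd N d A) B := by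
    unfold pwProd; rw [List.foldl_append]
  rw [this, foldl_eq _ _ (tr_pwProd A)]

lemma pwProd_singleton (v : EuclideanSpace ℝ (Fin d)) :
    pwProd N d [v] = segExp N d v := by
  rw [pwProd_cons]
  exact ttaMul_one _ (tr_segExp v)

lemma pwProd_nil_coeff (L : List (EuclideanSpace ℝ (Fin d))) : pwProd N d L [] = 1 := by
  induction L with
  | nil => rfl
  | cons v B ih =>
    rw [pwProd_cons, ttaMul_apply _ _ _ (by simp)]
    simp only [List.length_nil]
    rw [Finset.sum_range_one]
    simp only [List.take_nil, List.drop_nil]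
    have : segExp N d v [] = 1 := by simp [segExp]
    rw [this, ih, one_mul]


lemma segExp_apply (v : EuclideanSpace ℝ (Fin d)) (w : List (Fin d)) (hw : w.length ≤ N) :
    segExp N d v w = (w.map fun a => v a).prod / (Nat.factorial w.length) := if_pos hw

lemma neg_map_prod (v : EuclideanSpace ℝ (Fin d)) (u : List (Fin d)) :
    (u.map fun a => (-v) a).prod = (-1 : ℝ) ^ u.length * (u.map fun a => v a).prod := by
  induction u with
  | nil => simp
  | cons a u ih =>
    have hna : (-v) a = -(v a) := rfl
    rw [List.map_cons, List.prod_cons, ih, List.map_cons, List.prod_cons, hna,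
      List.length_cons, pow_succ]
    ring

lemma exp_neg_mul (v : EuclideanSpace ℝ (Fin d)) :
    ttaMul N d (segExp N d (-v)) (segExp N d v) = ttaOne d := by
  funext w
  by_cases hw : w.length ≤ N
  · rw [ttaMul_apply _ _ _ hw]
    rcases Nat.eq_zero_or_pos w.length with h0 | hpos
    · have hwnil : w = [] := List.eq_nil_of_length_eq_zero h0
      subst hwnil
      simp only [List.length_nil, Finset.range_one, Finset.sum_singleton, List.take_nil,
        List.drop_nil]
      rw [segExp_apply _ _ (by simp), segExp_apply _ _ (by simp)]
      simp [ttaOne_nil]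
    · set n := w.length with hn
      have key : ∀ i ∈ Finset.range (n + 1),
          segExp N d (-v) (w.take i) * segExp N d v (w.drop i)
          = ((-1 : ℝ) ^ i * (n.choose i)) * ((w.map fun a => v a).prod / (Nat.factorial n)) := by
        intro i hi
        rw [Finset.mem_range] at hi
        have hi' : i ≤ n := by omega
        have lt : (w.take i).length = i := by rw [List.length_take]; omega
        have ld : (w.drop i).length = n - i := by rw [List.length_drop]
        rw [segExp_apply _ _ (by rw [lt]; omega), segExp_apply _ _ (by rw [ld]; omega), lt, ld,
          neg_map_prod]
        have hprod : ((w.take i).map fun a => v a).prod * ((w.drop i).map fun a => v a).prod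
            = (w.map fun a => v a).prod := by
          rw [← List.prod_append, ← List.map_append, List.take_append_drop]
        have lttake : (w.take i).length = i := lt
        rw [lttake]
        set Pt := ((w.take i).map fun a => v a).prod with hPt
        set Pd := ((w.drop i).map fun a => v a).prod with hPd
        set Pw := (w.map fun a => v a).prod with hPw
        have hchoose : ((n.choose i : ℝ)) * (Nat.factorial i) * (Nat.factorial (n - i))
            = (Nat.factorial n) := by
          exact_mod_cast congrArg (Nat.cast : ℕ → ℝ) (Nat.choose_mul_factorial_mul_factorial hi')
        have hfi : (Nat.factorial i : ℝ) ≠ 0 := by positivity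
        have hfd : (Nat.factorial (n - i) : ℝ) ≠ 0 := by positivity
        have hfn : (Nat.factorial n : ℝ) ≠ 0 := by positivity
        rw [← hprod]
        field_simp
        linear_combination (-(Pt * Pd)) * hchoose
      rw [Finset.sum_congr rfl key, ← Finset.sum_mul]
      have hzero : (∑ i ∈ Finset.range (n + 1), (-1 : ℝ) ^ i * (n.choose i)) = 0 := by
        have h := Int.alternating_sum_range_choose_of_ne (n := n) (by omega)
        exact_mod_cast h
      rw [hzero, zero_mul, ttaOne_pos w hpos]
  · rw [ttaMul_apply_gt _ _ _ hw, ttaOne_pos w (by omega)]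

lemma invList_nil : invList ([] : List (EuclideanSpace ℝ (Fin d))) = [] := rfl

lemma invList_cons (v : EuclideanSpace ℝ (Fin d)) (L : List (EuclideanSpace ℝ (Fin d))) :
    invList (v :: L) = invList L ++ [-v] := by simp [invList]

lemma invList_invList (L : List (EuclideanSpace ℝ (Fin d))) : invList (invList L) = L := by
  simp [invList, List.map_reverse, List.map_map, Function.comp_def]

lemma pwProd_invList_mul (L : List (EuclideanSpace ℝ (Fin d))) :
    ttaMul N d (pwProd N d (invList L)) (pwProd N d L) = ttaOne d := by
  induction L with
  | nil =>
    rw [invList_nil]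
    exact ttaMul_one _ tr_one
  | cons v L ih =>
    rw [invList_cons, pwProd_append, pwProd_singleton, pwProd_cons, ttaMul_assoc,
      ← ttaMul_assoc (segExp N d (-v)), exp_neg_mul, one_ttaMul _ (tr_pwProd L), ih]

lemma pwProd_mul_invList (L : List (EuclideanSpace ℝ (Fin d))) :
    ttaMul N d (pwProd N d L) (pwProd N d (invList L)) = ttaOne d := by
  have h := pwProd_invList_mul (N := N) (invList L)
  rwa [invList_invList] at h

lemma inv_unique (x y z : TTA d) (hy : Tr N y) (hz : Tr N z)
    (h1 : ttaMul N d y x = ttaOne d) (h2 : ttaMul N d x z = ttaOne d) : y = z := by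
  have : ttaMul N d y (ttaMul N d x z) = ttaMul N d (ttaMul N d y x) z := (ttaMul_assoc _ _ _).symm
  rw [h2, h1, ttaMul_one _ hy, one_ttaMul _ hz] at this
  exact this

lemma ttaInv_eq (g : TTA d) (L : List (EuclideanSpace ℝ (Fin d))) (hL : pwProd N d L = g) :
    ttaInv N d g = pwProd N d (invList L) := by
  have hex : ∃ L', pwProd N d L' = g := ⟨L, hL⟩
  rw [ttaInv, dif_pos hex]
  have hspec : pwProd N d hex.choose = g := hex.choose_spec
  refine inv_unique g _ _ (tr_pwProd _) (tr_pwProd _) ?_ ?_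
  · have h := pwProd_invList_mul (N := N) hex.choose
    rw [hspec] at h; exact h
  · have h := pwProd_mul_invList (N := N) L
    rw [hL] at h; exact h

noncomputable def lenSum {d : ℕ} (L : List (EuclideanSpace ℝ (Fin d))) : ℝ :=
  (L.map fun v => ‖v‖).sum

lemma lenSum_nonneg (L : List (EuclideanSpace ℝ (Fin d))) : 0 ≤ lenSum L := by
  apply List.sum_nonneg
  intro x hx
  rcases List.mem_map.mp hx with ⟨v, _, rfl⟩
  exact norm_nonneg v

lemma lenSum_append (A B : List (EuclideanSpace ℝ (Fin d))) :
    lenSum (A ++ B) = lenSum A + lenSum B := by simp [lenSum]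

lemma lenSum_invList (L : List (EuclideanSpace ℝ (Fin d))) : lenSum (invList L) = lenSum L := by
  simp [invList, lenSum, List.map_reverse, List.sum_reverse, List.map_map, Function.comp_def]

lemma coord_le (v : EuclideanSpace ℝ (Fin d)) (a : Fin d) : |v a| ≤ ‖v‖ := by
  rw [EuclideanSpace.norm_eq]
  have h1 : |v a| = Real.sqrt (|v a| ^ 2) := (Real.sqrt_sq (abs_nonneg _)).symm
  rw [h1]
  apply Real.sqrt_le_sqrt
  calc |v a| ^ 2 = ‖v a‖ ^ 2 := by rw [Real.norm_eq_abs]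
    _ ≤ ∑ i, ‖v i‖ ^ 2 :=
      Finset.single_le_sum (f := fun i => ‖v i‖ ^ 2) (fun i _ => sq_nonneg _) (Finset.mem_univ a)

lemma map_prod_le (v : EuclideanSpace ℝ (Fin d)) (u : List (Fin d)) :
    |(u.map fun a => v a).prod| ≤ ‖v‖ ^ u.length := by
  induction u with
  | nil => simp
  | cons a u ih =>
    rw [List.map_cons, List.prod_cons, abs_mul, List.length_cons, pow_succ']
    exact mul_le_mul (coord_le v a) ih (abs_nonneg _) (norm_nonneg _)

lemma segExp_le (v : EuclideanSpace ℝ (Fin d)) (w : List (Fin d)) :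
    |segExp N d v w| ≤ ‖v‖ ^ w.length := by
  by_cases hw : w.length ≤ N
  · rw [segExp_apply _ _ hw, abs_div,
      abs_of_nonneg (by positivity : (0:ℝ) ≤ (Nat.factorial w.length : ℝ))]
    calc |(w.map fun a => v a).prod| / (Nat.factorial w.length : ℝ)
        ≤ |(w.map fun a => v a).prod| := by
          apply div_le_self (abs_nonneg _)
          exact_mod_cast Nat.one_le_iff_ne_zero.mpr (Nat.factorial_ne_zero _)
      _ ≤ ‖v‖ ^ w.length := map_prod_le v w
  · rw [segExp, if_neg hw, abs_zero]
    positivity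

lemma pwProd_le (L : List (EuclideanSpace ℝ (Fin d))) :
    ∀ w : List (Fin d), |pwProd N d L w| ≤ lenSum L ^ w.length := by
  induction L using List.reverseRecOn with
  | nil =>
    intro w
    cases w with
    | nil => simp [pwProd, ttaOne, lenSum]
    | cons a u =>
      have h0 : pwProd N d [] (a :: u) = 0 := by
        rw [show pwProd N d [] = ttaOne d from rfl]
        exact ttaOne_ne _ (by simp)
      rw [h0, abs_zero]
      exact pow_nonneg (lenSum_nonneg _) _
  | append_singleton L v ih =>
    intro w
    rw [pwProd_append, pwProd_singleton]
    have hS : 0 ≤ lenSum L := lenSum_nonneg L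
    have hv : 0 ≤ ‖v‖ := norm_nonneg v
    have hl : lenSum (L ++ [v]) = lenSum L + ‖v‖ := by
      rw [lenSum_append]; simp [lenSum]
    by_cases hw : w.length ≤ N
    · rw [ttaMul_apply _ _ _ hw]
      set n := w.length with hn
      calc |∑ i ∈ Finset.range (n + 1), pwProd N d L (w.take i) * segExp N d v (w.drop i)|
          ≤ ∑ i ∈ Finset.range (n + 1), |pwProd N d L (w.take i) * segExp N d v (w.drop i)| :=
            Finset.abs_sum_le_sum_abs _ _
        _ ≤ ∑ i ∈ Finset.range (n + 1), lenSum L ^ i * ‖v‖ ^ (n - i) * (n.choose i) := by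
            apply Finset.sum_le_sum
            intro i hi
            rw [Finset.mem_range] at hi
            have h1 : |pwProd N d L (w.take i)| ≤ lenSum L ^ i := by
              have h := ih (w.take i)
              rwa [List.length_take, Nat.min_eq_left (by omega)] at h
            have h2 : |segExp N d v (w.drop i)| ≤ ‖v‖ ^ (n - i) := by
              have h := segExp_le (N := N) v (w.drop i)
              rwa [List.length_drop] at h
            have h3 : |pwProd N d L (w.take i) * segExp N d v (w.drop i)|
                ≤ lenSum L ^ i * ‖v‖ ^ (n - i) := by
              rw [abs_mul]
              exact mul_le_mul h1 h2 (abs_nonneg _) (by positivity)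
            have h4 : (1 : ℝ) ≤ (n.choose i) := by
              exact_mod_cast Nat.succ_le_of_lt (Nat.choose_pos (by omega))
            exact h3.trans (le_mul_of_one_le_right (by positivity) h4)
        _ = (lenSum L + ‖v‖) ^ n := (add_pow (lenSum L) ‖v‖ n).symm
        _ = lenSum (L ++ [v]) ^ n := by rw [hl]
    · rw [ttaMul_apply_gt _ _ _ hw, abs_zero]
      exact pow_nonneg (lenSum_nonneg _) _

lemma pwProd_le' (L : List (EuclideanSpace ℝ (Fin d))) {s : ℝ} (hs : lenSum L ≤ s)
    (w : List (Fin d)) : |pwProd N d L w| ≤ s ^ w.length :=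
  (pwProd_le L w).trans (pow_le_pow_left₀ (lenSum_nonneg L) hs _)

lemma smul_map_prod (c : ℝ) (v : EuclideanSpace ℝ (Fin d)) (u : List (Fin d)) :
    (u.map fun a => (c • v) a).prod = c ^ u.length * (u.map fun a => v a).prod := by
  induction u with
  | nil => simp
  | cons a u ih =>
    have hca : (c • v) a = c * (v a) := rfl
    rw [List.map_cons, List.prod_cons, ih, List.map_cons, List.prod_cons, hca,
      List.length_cons, pow_succ]
    ring

lemma segExp_smul (c : ℝ) (v : EuclideanSpace ℝ (Fin d)) (w : List (Fin d)) :
    segExp N d (c • v) w = c ^ w.length * segExp N d v w := by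
  by_cases hw : w.length ≤ N
  · rw [segExp_apply _ _ hw, segExp_apply _ _ hw, smul_map_prod]
    ring
  · rw [segExp, if_neg hw, segExp, if_neg hw, mul_zero]

noncomputable def smulL {d : ℕ} (c : ℝ) (L : List (EuclideanSpace ℝ (Fin d))) :
    List (EuclideanSpace ℝ (Fin d)) := L.map fun v => c • v

lemma graded_mul (x y x' y' : TTA d) (c : ℝ)
    (hx : ∀ w, x' w = c ^ w.length * x w) (hy : ∀ w, y' w = c ^ w.length * y w) :
    ∀ w, ttaMul N d x' y' w = c ^ w.length * ttaMul N d x y w := by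
  intro w
  by_cases hw : w.length ≤ N
  · rw [ttaMul_apply _ _ _ hw, ttaMul_apply _ _ _ hw, Finset.mul_sum]
    refine Finset.sum_congr rfl fun i hi => ?_
    rw [Finset.mem_range] at hi
    rw [hx, hy, List.length_take, List.length_drop, Nat.min_eq_left (by omega)]
    have hsplit : c ^ i * c ^ (w.length - i) = c ^ w.length := by
      rw [← pow_add]; congr 1; omega
    linear_combination (x (w.take i) * y (w.drop i)) * hsplit
  · rw [ttaMul_apply_gt _ _ _ hw, ttaMul_apply_gt _ _ _ hw, mul_zero]

lemma pwProd_smulL (c : ℝ) (L : List (EuclideanSpace ℝ (Fin d))) :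
    ∀ w, pwProd N d (smulL c L) w = c ^ w.length * pwProd N d L w := by
  induction L with
  | nil =>
    intro w
    cases w with
    | nil => simp [pwProd, smulL, ttaOne]
    | cons a u =>
      have h0 : pwProd N d [] (a :: u) = 0 := by
        rw [show pwProd N d [] = ttaOne d from rfl]
        exact ttaOne_ne _ (by simp)
      have h1 : smulL c ([] : List (EuclideanSpace ℝ (Fin d))) = [] := rfl
      rw [h1, h0, mul_zero]
  | cons v L ih =>
    intro w
    have h1 : smulL c (v :: L) = (c • v) :: smulL c L := rfl
    rw [h1, pwProd_cons, pwProd_cons]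
    exact graded_mul _ _ _ _ c (fun u => segExp_smul c v u) ih w

lemma lenSum_smulL (c : ℝ) (hc : 0 ≤ c) (L : List (EuclideanSpace ℝ (Fin d))) :
    lenSum (smulL c L) = c * lenSum L := by
  unfold lenSum smulL
  rw [List.map_map]
  induction L with
  | nil => simp
  | cons v L ih =>
    rw [List.map_cons, List.sum_cons, ih, List.map_cons, List.sum_cons, Function.comp_apply,
      norm_smul, Real.norm_eq_abs, abs_of_nonneg hc]
    ring

def Van (k : ℕ) {d : ℕ} (x : TTA d) : Prop :=
  ∀ w : List (Fin d), 0 < w.length → w.length < k → x w = 0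

lemma van_mul (k : ℕ) (x y : TTA d) (hx : Van k x) (hy : Van k y) :
    Van k (ttaMul N d x y) := by
  intro w h0 hk
  by_cases hw : w.length ≤ N
  · rw [ttaMul_apply _ _ _ hw]
    apply Finset.sum_eq_zero
    intro i hi
    rw [Finset.mem_range] at hi
    rcases Nat.eq_zero_or_pos i with rfl | hipos
    · rw [List.take_zero, List.drop_zero, hy w h0 hk, mul_zero]
    · rw [hx (w.take i) (by rw [List.length_take]; omega) (by rw [List.length_take]; omega),
        zero_mul]
  · exact ttaMul_apply_gt _ _ _ hw

lemma level_add (k : ℕ) (hk0 : 0 < k) (hkN : k ≤ N) (x y : TTA d)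
    (hx0 : x [] = 1) (hy0 : y [] = 1) (hx : Van k x) (hy : Van k y)
    (w : List (Fin d)) (hw : w.length = k) :
    ttaMul N d x y w = x w + y w := by
  rw [ttaMul_apply _ _ _ (by omega), hw]
  rw [Finset.sum_range_succ]
  have htk : w.take k = w := by rw [← hw]; exact List.take_length (l := w)
  have hdk : w.drop k = [] := by rw [← hw]; exact List.drop_length (l := w)
  rw [htk, hdk, hy0, mul_one]
  have hfirst : (∑ i ∈ Finset.range k, x (w.take i) * y (w.drop i)) = y w := by
    rw [Finset.sum_eq_single_of_mem 0 (Finset.mem_range.mpr hk0)]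
    · rw [List.take_zero, List.drop_zero, hx0, one_mul]
    · intro i hi hne
      rw [Finset.mem_range] at hi
      rw [hx (w.take i) (by rw [List.length_take]; omega) (by rw [List.length_take]; omega),
        zero_mul]
  rw [hfirst]
  ring

lemma inv_van (k : ℕ) (x y : TTA d) (hx0 : x [] = 1)
    (hmul : ttaMul N d y x = ttaOne d) (hyTr : Tr N y) (hx : Van k x) : Van k y := by
  intro w h0 hnk
  by_cases hwN : w.length ≤ N
  · have h := congrFun hmul w
    rw [ttaOne_pos w h0, ttaMul_apply _ _ _ hwN] at h
    rw [Finset.sum_eq_single_of_mem w.length (by simp)] at h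
    · have htk : w.take w.length = w := List.take_length (l := w)
      have hdk : w.drop w.length = [] := List.drop_length (l := w)
      rw [htk, hdk, hx0, mul_one] at h
      exact h
    · intro i hi hne
      rw [Finset.mem_range] at hi
      rw [hx (w.drop i) (by rw [List.length_drop]; omega) (by rw [List.length_drop]; omega),
        mul_zero]
  · exact hyTr w (by omega)

lemma inv_level (k : ℕ) (hk0 : 0 < k) (hkN : k ≤ N) (x y : TTA d)
    (hx0 : x [] = 1) (hy0 : y [] = 1)
    (hmul : ttaMul N d y x = ttaOne d) (hyTr : Tr N y) (hx : Van k x)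
    (w : List (Fin d)) (hw : w.length = k) : y w = - x w := by
  have hyv : Van k y := inv_van k x y hx0 hmul hyTr hx
  have h := congrFun hmul w
  rw [ttaOne_pos w (by omega), level_add k hk0 hkN y x hy0 hx0 hyv hx w hw] at h
  linarith
lemma exists_ofFn {k : ℕ} (w : List (Fin d)) (h : w.length = k) :
    ∃ f : Fin k → Fin d, List.ofFn f = w := by
  subst h
  exact ⟨w.get, List.ofFn_get w⟩

lemma realize (k : ℕ) (hk0 : 0 < k) (Λ : List (EuclideanSpace ℝ (Fin d)))
    (hΛ : Van k (pwProd N d Λ)) (c : ℝ) :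
    ∃ R : List (EuclideanSpace ℝ (Fin d)),
      Van k (pwProd N d R) ∧
      (∀ w : List (Fin d), w.length = k → pwProd N d R w = c * pwProd N d Λ w) ∧
      lenSum R = |c| ^ ((k : ℝ)⁻¹) * lenSum Λ := by
  rcases le_or_gt 0 c with hc | hc
  · set μ := c ^ ((k : ℝ)⁻¹) with hμ
    have hμ0 : 0 ≤ μ := Real.rpow_nonneg hc _
    have hμk : μ ^ k = c := Real.rpow_inv_natCast_pow hc (by omega)
    refine ⟨smulL μ Λ, ?_, ?_, ?_⟩
    · intro w h0 hkw
      rw [pwProd_smulL, hΛ w h0 hkw, mul_zero]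
    · intro w hw
      rw [pwProd_smulL, hw, hμk]
    · rw [lenSum_smulL μ hμ0, abs_of_nonneg hc]
  · set μ := (-c) ^ ((k : ℝ)⁻¹) with hμ
    have hcn : 0 ≤ -c := by linarith
    have hμ0 : 0 ≤ μ := Real.rpow_nonneg hcn _
    have hμk : μ ^ k = -c := Real.rpow_inv_natCast_pow hcn (by omega)
    set R0 := smulL μ Λ with hR0
    have hVanR0 : Van k (pwProd N d R0) := by
      intro w h0 hkw
      rw [hR0, pwProd_smulL, hΛ w h0 hkw, mul_zero]
    refine ⟨invList R0, ?_, ?_, ?_⟩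
    · exact inv_van k (pwProd N d R0) _ (pwProd_nil_coeff _) (pwProd_invList_mul R0)
        (tr_pwProd _) hVanR0
    · intro w hw
      by_cases hkN : k ≤ N
      · have h := inv_level k hk0 hkN (pwProd N d R0) (pwProd N d (invList R0))
          (pwProd_nil_coeff _) (pwProd_nil_coeff _) (pwProd_invList_mul R0)
          (tr_pwProd _) hVanR0 w hw
        rw [h, hR0, pwProd_smulL, hw, hμk]
        ring
      · rw [tr_pwProd _ w (by omega), tr_pwProd _ w (by omega), mul_zero]
    · rw [lenSum_invList, hR0, lenSum_smulL μ hμ0, abs_of_neg hc]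

lemma lenSum_flatten (ls : List (List (EuclideanSpace ℝ (Fin d)))) :
    lenSum ls.flatten = (ls.map lenSum).sum := by
  induction ls with
  | nil => simp [lenSum]
  | cons l ls ih => rw [List.flatten_cons, lenSum_append, ih, List.map_cons, List.sum_cons]

lemma flat (k : ℕ) (hk0 : 0 < k) (hkN : k ≤ N) (ls : List (List (EuclideanSpace ℝ (Fin d))))
    (h : ∀ l ∈ ls, Van k (pwProd N d l)) :
    Van k (pwProd N d ls.flatten) ∧
      ∀ w : List (Fin d), w.length = k →
        pwProd N d ls.flatten w = (ls.map (fun l => pwProd N d l w)).sum := by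
  induction ls with
  | nil =>
    constructor
    · intro w h0 hkw
      rw [List.flatten_nil, show pwProd N d [] = ttaOne d from rfl]
      exact ttaOne_pos w h0
    · intro w hw
      rw [List.flatten_nil, show pwProd N d [] = ttaOne d from rfl, List.map_nil, List.sum_nil]
      exact ttaOne_pos w (by omega)
  | cons l ls ih =>
    have hl : Van k (pwProd N d l) := h l (by simp)
    have hls : ∀ l' ∈ ls, Van k (pwProd N d l') := fun l' hl' => h l' (by simp [hl'])
    obtain ⟨ihV, ihS⟩ := ih hls
    constructor
    · intro w h0 hkw
      rw [List.flatten_cons, pwProd_append]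
      exact van_mul k _ _ hl ihV w h0 hkw
    · intro w hw
      rw [List.flatten_cons, pwProd_append,
        level_add k hk0 hkN _ _ (pwProd_nil_coeff _) (pwProd_nil_coeff _) hl ihV w hw,
        ihS w hw, List.map_cons, List.sum_cons]

def Vc (N d k : ℕ) : Set ((Fin k → Fin d) → ℝ) :=
  {ξ | ∃ L : List (EuclideanSpace ℝ (Fin d)),
    Van k (pwProd N d L) ∧ (fun f => pwProd N d L (List.ofFn f)) = ξ}

noncomputable def VS (N d : ℕ) (k : ℕ) (hk0 : 0 < k) (hkN : k ≤ N) :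
    Submodule ℝ ((Fin k → Fin d) → ℝ) where
  carrier := Vc N d k
  zero_mem' := by
    refine ⟨[], ?_, ?_⟩
    · intro w h0 hkw
      rw [show pwProd N d [] = ttaOne d from rfl]
      exact ttaOne_pos w h0
    · funext f
      rw [show pwProd N d [] = ttaOne d from rfl]
      have : (List.ofFn f).length = k := List.length_ofFn (f := f)
      rw [ttaOne_pos _ (by omega)]
      rfl
  add_mem' := by
    rintro ξ η ⟨La, hVa, ha⟩ ⟨Lb, hVb, hb⟩
    refine ⟨La ++ Lb, ?_, ?_⟩
    · intro w h0 hkw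
      rw [pwProd_append]
      exact van_mul k _ _ hVa hVb w h0 hkw
    · funext f
      rw [pwProd_append, level_add k hk0 hkN _ _ (pwProd_nil_coeff _) (pwProd_nil_coeff _)
        hVa hVb (List.ofFn f) (List.length_ofFn (f := f))]
      rw [Pi.add_apply, ← congrFun ha f, ← congrFun hb f]
  smul_mem' := by
    rintro c ξ ⟨L, hV, hξ⟩
    obtain ⟨R, hRV, hRval, _⟩ := realize k hk0 L hV c
    refine ⟨R, hRV, ?_⟩
    funext f
    rw [hRval (List.ofFn f) (List.length_ofFn (f := f)), Pi.smul_apply, smul_eq_mul, ← congrFun hξ f]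
lemma coeff_bound {X : Type*} [Fintype X] (p : Submodule ℝ (X → ℝ)) :
    ∃ (M : ℕ) (u : Fin M → (X → ℝ)) (Dc : Fin M → ℝ),
      (∀ j, u j ∈ p) ∧ (∀ j, 0 ≤ Dc j) ∧
      ∀ ξ : X → ℝ, ξ ∈ p → ∃ cc : Fin M → ℝ,
        (∀ j, |cc j| ≤ Dc j * ‖ξ‖) ∧ ξ = ∑ j, cc j • u j := by
  classical
  let b := Module.finBasis ℝ ↥p
  let M := Module.finrank ℝ ↥p
  let φ : Fin M → (↥p →L[ℝ] ℝ) :=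
    fun j => ⟨b.coord j, (b.coord j).continuous_of_finiteDimensional⟩
  refine ⟨M, fun j => (b j : X → ℝ), fun j => ‖φ j‖, fun j => (b j).2,
    fun j => norm_nonneg (φ j), ?_⟩
  intro ξ hξ
  refine ⟨fun j => b.repr ⟨ξ, hξ⟩ j, ?_, ?_⟩
  · intro j
    have h := (φ j).le_opNorm ⟨ξ, hξ⟩
    have h2 : (φ j) ⟨ξ, hξ⟩ = b.repr ⟨ξ, hξ⟩ j := by
      show b.coord j ⟨ξ, hξ⟩ = _
      rw [Module.Basis.coord_apply]
    rw [h2] at h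
    rw [Submodule.coe_norm] at h
    simpa [Real.norm_eq_abs] using h
  · have h := b.sum_repr ⟨ξ, hξ⟩
    have h2 := congrArg (Subtype.val) h
    simp only [AddSubmonoidClass.coe_finset_sum, SetLike.val_smul] at h2
    show ξ = ∑ j, (b.repr ⟨ξ, hξ⟩) j • ((b j : X → ℝ))
    exact h2.symm

lemma stage (k : ℕ) (hk0 : 0 < k) (hkN : k ≤ N) :
    ∃ C : ℝ, 0 < C ∧ ∀ ε : ℝ, 0 ≤ ε → ∀ a : TTA d, (∃ L, pwProd N d L = a) →
      Van k a → (∀ w, |a w| ≤ ε ^ w.length) →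
      ∃ (B : List (EuclideanSpace ℝ (Fin d))) (a' : TTA d),
        (∃ L', pwProd N d L' = a') ∧ a = ttaMul N d (pwProd N d B) a' ∧
        lenSum B ≤ C * ε ∧ Van (k + 1) a' ∧ ∀ w, |a' w| ≤ (C * ε) ^ w.length := by
  classical
  obtain ⟨M, u, Dc, hu, hDc0, hrep⟩ := coeff_bound (X := Fin k → Fin d) (VS N d k hk0 hkN)
  choose Λ hΛV hΛval using hu
  set C1 : ℝ := ∑ j, (Dc j) ^ ((k : ℝ)⁻¹) * lenSum (Λ j) with hC1
  have hC10 : 0 ≤ C1 :=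
    Finset.sum_nonneg fun j _ => mul_nonneg (Real.rpow_nonneg (hDc0 j) _) (lenSum_nonneg _)
  set C0 : ℝ := 1 + C1 with hC0
  have hC01 : (1 : ℝ) ≤ C0 := by rw [hC0]; linarith
  have hN1 : (1 : ℝ) ≤ (N : ℝ) + 1 := by
    have : (0 : ℝ) ≤ (N : ℝ) := Nat.cast_nonneg N
    linarith
  set C : ℝ := ((N : ℝ) + 1) * C0 with hC
  have hCpos : 0 < C := by rw [hC]; nlinarith
  have hC1C : C1 ≤ C := by rw [hC, hC0]; nlinarith
  refine ⟨C, hCpos, ?_⟩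
  rintro ε hε a ⟨La, hLa⟩ hVan hbd
  have haTr : Tr N a := by rw [← hLa]; exact tr_pwProd La
  have ha0 : a [] = 1 := by rw [← hLa]; exact pwProd_nil_coeff La
  set ξ : (Fin k → Fin d) → ℝ := fun f => a (List.ofFn f) with hξdef
  have hmemξ : ξ ∈ VS N d k hk0 hkN := by
    refine ⟨La, ?_, ?_⟩
    · rw [hLa]; exact hVan
    · funext f; rw [hLa]
  have hξnorm : ‖ξ‖ ≤ ε ^ k := by
    rw [pi_norm_le_iff_of_nonneg (by positivity)]
    intro f
    have h := hbd (List.ofFn f)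
    rw [List.length_ofFn] at h
    simpa [hξdef, Real.norm_eq_abs] using h
  obtain ⟨cc, hcc, hccsum⟩ := hrep ξ hmemξ
  have hci : ∀ j, |cc j| ≤ Dc j * ε ^ k := by
    intro j
    refine (hcc j).trans (mul_le_mul_of_nonneg_left hξnorm (hDc0 j))
  have hreal : ∀ j : Fin M, ∃ R, Van k (pwProd N d R) ∧
      (∀ w : List (Fin d), w.length = k → pwProd N d R w = cc j * pwProd N d (Λ j) w) ∧
      lenSum R = |cc j| ^ ((k : ℝ)⁻¹) * lenSum (Λ j) :=
    fun j => realize k hk0 (Λ j) (hΛV j) (cc j)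
  choose R hRV hRval hRlen using hreal
  set B := (List.ofFn R).flatten with hB
  have hmemls : ∀ l ∈ List.ofFn R, Van k (pwProd N d l) := by
    intro l hl
    rw [List.mem_ofFn] at hl
    rcases hl with ⟨j, rfl⟩
    exact hRV j
  obtain ⟨hBV, hBval⟩ := flat k hk0 hkN (List.ofFn R) hmemls
  have hBa : ∀ w : List (Fin d), w.length = k → pwProd N d B w = a w := by
    intro w hw
    obtain ⟨f, hf⟩ := exists_ofFn w hw
    rw [hBval w hw, List.map_ofFn, List.sum_ofFn]
    have h5 : ∀ j : Fin M, (Function.comp (fun l => pwProd N d l w) R) j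
        = cc j * (u j f) := by
      intro j
      have h6 := congrFun (hΛval j) f
      rw [hf] at h6
      rw [Function.comp_apply, hRval j w hw, h6]
    rw [Finset.sum_congr rfl (fun j _ => h5 j)]
    have h7 := congrFun hccsum f
    rw [Finset.sum_apply] at h7
    simp only [Pi.smul_apply, smul_eq_mul] at h7
    rw [← h7, hξdef]
    show a (List.ofFn f) = a w
    rw [hf]
  set a' : TTA d := ttaMul N d (pwProd N d (invList B)) a with ha'
  have ha'w : pwProd N d (invList B ++ La) = a' := by rw [pwProd_append, hLa]
  have hBinvVan : Van k (pwProd N d (invList B)) :=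
    inv_van k (pwProd N d B) _ (pwProd_nil_coeff B) (pwProd_invList_mul B) (tr_pwProd _) hBV
  have hlenB : lenSum B ≤ C1 * ε := by
    rw [hB, lenSum_flatten, List.map_ofFn, List.sum_ofFn]
    have hterm : ∀ j : Fin M, (Function.comp lenSum R) j
        ≤ ((Dc j) ^ ((k : ℝ)⁻¹) * lenSum (Λ j)) * ε := by
      intro j
      rw [Function.comp_apply, hRlen j]
      have h7 : |cc j| ^ ((k : ℝ)⁻¹) ≤ (Dc j * ε ^ k) ^ ((k : ℝ)⁻¹) :=
        Real.rpow_le_rpow (abs_nonneg _) (hci j) (by positivity)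
      have h8 : (Dc j * ε ^ k) ^ ((k : ℝ)⁻¹) = (Dc j) ^ ((k : ℝ)⁻¹) * ε := by
        rw [Real.mul_rpow (hDc0 j) (by positivity),
          Real.pow_rpow_inv_natCast hε (by omega)]
      calc |cc j| ^ ((k : ℝ)⁻¹) * lenSum (Λ j)
          ≤ (Dc j * ε ^ k) ^ ((k : ℝ)⁻¹) * lenSum (Λ j) :=
            mul_le_mul_of_nonneg_right h7 (lenSum_nonneg _)
        _ = ((Dc j) ^ ((k : ℝ)⁻¹) * lenSum (Λ j)) * ε := by rw [h8]; ring
    calc (∑ j, (Function.comp lenSum R) j)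
        ≤ ∑ j, ((Dc j) ^ ((k : ℝ)⁻¹) * lenSum (Λ j)) * ε :=
          Finset.sum_le_sum fun j _ => hterm j
      _ = C1 * ε := by rw [hC1, Finset.sum_mul]
  have hlenBC : lenSum B ≤ C * ε :=
    hlenB.trans (mul_le_mul_of_nonneg_right hC1C hε)
  have hlenBinv : lenSum (invList B) ≤ C0 * ε := by
    rw [lenSum_invList]
    refine hlenB.trans (mul_le_mul_of_nonneg_right ?_ hε)
    rw [hC0]; linarith
  have hPinv : ∀ v : List (Fin d), |pwProd N d (invList B) v| ≤ (C0 * ε) ^ v.length :=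
    fun v => pwProd_le' _ hlenBinv v
  have hA : ∀ v : List (Fin d), |a v| ≤ (C0 * ε) ^ v.length := by
    intro v
    refine (hbd v).trans (pow_le_pow_left₀ hε ?_ _)
    nlinarith
  refine ⟨B, a', ⟨invList B ++ La, ha'w⟩, ?_, hlenBC, ?_, ?_⟩
  · rw [ha', ← ttaMul_assoc, pwProd_mul_invList, one_ttaMul _ haTr]
  · intro w h0 hkw
    rcases Nat.lt_or_ge w.length k with hlt | hge
    · exact van_mul k _ a hBinvVan hVan w h0 hlt
    · have hwk : w.length = k := by omega
      rw [ha', level_add k hk0 hkN _ a (pwProd_nil_coeff _) ha0 hBinvVan hVan w hwk,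
        inv_level k hk0 hkN (pwProd N d B) _ (pwProd_nil_coeff _) (pwProd_nil_coeff _)
          (pwProd_invList_mul B) (tr_pwProd _) hBV w hwk,
        hBa w hwk]
      ring
  · intro w
    by_cases hw : w.length ≤ N
    · rcases Nat.eq_zero_or_pos w.length with h0 | hpos
      · have hwnil : w = [] := List.eq_nil_of_length_eq_zero h0
        subst hwnil
        have h1 : a' [] = 1 := by rw [← ha'w]; exact pwProd_nil_coeff _
        rw [h1]
        simp
      · have hstep : |a' w| ≤ (w.length + 1 : ℝ) * (C0 * ε) ^ w.length := by
          rw [ha', ttaMul_apply _ _ _ hw]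
          calc |∑ i ∈ Finset.range (w.length + 1),
                pwProd N d (invList B) (w.take i) * a (w.drop i)|
              ≤ ∑ i ∈ Finset.range (w.length + 1),
                |pwProd N d (invList B) (w.take i) * a (w.drop i)| :=
                Finset.abs_sum_le_sum_abs _ _
            _ ≤ ∑ _i ∈ Finset.range (w.length + 1), (C0 * ε) ^ w.length := by
                apply Finset.sum_le_sum
                intro i hi
                rw [Finset.mem_range] at hi
                rw [abs_mul]
                have g1 : |pwProd N d (invList B) (w.take i)| ≤ (C0 * ε) ^ i := by
                  have g := hPinv (w.take i)
                  rwa [List.length_take, Nat.min_eq_left (by omega)] at g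
                have g2 : |a (w.drop i)| ≤ (C0 * ε) ^ (w.length - i) := by
                  have g := hA (w.drop i)
                  rwa [List.length_drop] at g
                calc |pwProd N d (invList B) (w.take i)| * |a (w.drop i)|
                    ≤ (C0 * ε) ^ i * (C0 * ε) ^ (w.length - i) :=
                      mul_le_mul g1 g2 (abs_nonneg _) (by positivity)
                  _ = (C0 * ε) ^ w.length := by rw [← pow_add]; congr 1; omega
            _ = (w.length + 1 : ℝ) * (C0 * ε) ^ w.length := by
                rw [Finset.sum_const, Finset.card_range]
                push_cast; ring
        refine hstep.trans ?_
        have hn1 : (w.length + 1 : ℝ) ≤ ((N : ℝ) + 1) ^ w.length := by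
          calc (w.length + 1 : ℝ) ≤ (N : ℝ) + 1 := by
                have : (w.length : ℝ) ≤ (N : ℝ) := by exact_mod_cast hw
                linarith
            _ ≤ ((N : ℝ) + 1) ^ w.length := le_self_pow₀ hN1 (by omega)
        calc (w.length + 1 : ℝ) * (C0 * ε) ^ w.length
            ≤ ((N : ℝ) + 1) ^ w.length * (C0 * ε) ^ w.length :=
              mul_le_mul_of_nonneg_right hn1 (by positivity)
          _ = (C * ε) ^ w.length := by
              rw [hC, mul_pow, mul_pow, mul_pow]
              ring
    · have h1 : a' w = 0 := by rw [ha']; exact tr_ttaMul _ _ w (by omega)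
      rw [h1, abs_zero]
      positivity
lemma ccSet_bdd (a : TTA d) :
    BddBelow { r | ∃ L, pwProd N d L = a ∧ r = (L.map fun v => ‖v‖).sum } := by
  refine ⟨0, ?_⟩
  rintro r ⟨L, _, rfl⟩
  exact lenSum_nonneg L

lemma ccNorm_nonneg (a : TTA d) : 0 ≤ ccNorm N d a := by
  apply Real.sInf_nonneg
  rintro r ⟨L, _, rfl⟩
  exact lenSum_nonneg L

lemma ccNorm_le (a : TTA d) (L : List (EuclideanSpace ℝ (Fin d))) (h : pwProd N d L = a) :
    ccNorm N d a ≤ lenSum L :=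
  csInf_le (ccSet_bdd a) ⟨L, h, rfl⟩

lemma exists_list_lt (a : TTA d) (ha : ∃ L, pwProd N d L = a) {δ : ℝ} (hδ : 0 < δ) :
    ∃ L, pwProd N d L = a ∧ lenSum L < ccNorm N d a + δ := by
  have hne : Set.Nonempty { r | ∃ L, pwProd N d L = a ∧ r = (L.map fun v => ‖v‖).sum } := by
    obtain ⟨L, hL⟩ := ha
    exact ⟨_, L, hL, rfl⟩
  obtain ⟨r, ⟨L, hL, hr⟩, hlt⟩ := Real.lt_sInf_add_pos hne hδ
  subst hr
  exact ⟨L, hL, hlt⟩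

lemma le_of_forall_pos_le_add' {a b : ℝ} (h : ∀ δ : ℝ, 0 < δ → a ≤ b + δ) : a ≤ b := by
  by_contra hab
  push_neg at hab
  have := h ((a - b) / 2) (by linarith)
  linarith

lemma down : ∀ j : ℕ, j ≤ N → ∃ Cd : ℝ, 0 < Cd ∧ ∀ ε : ℝ, 0 ≤ ε → ∀ a : TTA d,
    (∃ L, pwProd N d L = a) → Van (N + 1 - j) a → (∀ w, |a w| ≤ ε ^ w.length) →
    ccNorm N d a ≤ Cd * ε := by
  intro j
  induction j with
  | zero =>
    intro _
    refine ⟨1, one_pos, ?_⟩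
    rintro ε hε a ⟨La, hLa⟩ hVan _
    have haone : a = ttaOne d := by
      funext w
      rcases Nat.eq_zero_or_pos w.length with h0 | hpos
      · have hwnil : w = [] := List.eq_nil_of_length_eq_zero h0
        subst hwnil
        rw [← hLa, pwProd_nil_coeff, ttaOne_nil]
      · by_cases hw : w.length ≤ N
        · rw [hVan w hpos (by omega), ttaOne_pos w hpos]
        · rw [← hLa, tr_pwProd La w (by omega), ttaOne_pos w hpos]
    have h0 : ccNorm N d a ≤ 0 := by
      have h1 : pwProd N d [] = a := by rw [haone]; rfl
      have h2 := ccNorm_le a [] h1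
      simpa [lenSum] using h2
    calc ccNorm N d a ≤ 0 := h0
      _ ≤ 1 * ε := by linarith
  | succ j ih =>
    intro hj1
    obtain ⟨Cd, hCd, hIH⟩ := ih (by omega)
    obtain ⟨Cs, hCs, hstage⟩ := stage (N := N) (d := d) (N - j) (by omega) (by omega)
    refine ⟨Cs + Cd * Cs, by nlinarith, ?_⟩
    intro ε hε a ha hVan hbd
    have hVan' : Van (N - j) a := by
      have he : N + 1 - (j + 1) = N - j := by omega
      rwa [he] at hVan
    obtain ⟨B, a', ha'rep, haeq, hlenB, hVan'', hbd'⟩ := hstage ε hε a ha hVan' hbd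
    have hVan''' : Van (N + 1 - j) a' := by
      have he : N - j + 1 = N + 1 - j := by omega
      rwa [he] at hVan''
    have hccn' : ccNorm N d a' ≤ Cd * (Cs * ε) :=
      hIH (Cs * ε) (by positivity) a' ha'rep hVan''' hbd'
    have h2 : ccNorm N d a ≤ lenSum B + ccNorm N d a' := by
      apply le_of_forall_pos_le_add'
      intro δ hδ
      obtain ⟨L'', hL'', hlen''⟩ := exists_list_lt a' ha'rep hδ
      have hBL : pwProd N d (B ++ L'') = a := by rw [pwProd_append, hL'', ← haeq]
      have h1 := ccNorm_le a (B ++ L'') hBL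
      rw [lenSum_append] at h1
      linarith
    calc ccNorm N d a ≤ lenSum B + ccNorm N d a' := h2
      _ ≤ Cs * ε + Cd * (Cs * ε) := add_le_add hlenB hccn'
      _ = (Cs + Cd * Cs) * ε := by ring

lemma lemmaA (hN : 1 ≤ N) : ∃ CA : ℝ, 0 < CA ∧ ∀ ε : ℝ, 0 ≤ ε → ∀ a : TTA d,
    (∃ L, pwProd N d L = a) → (∀ w, |a w| ≤ ε ^ w.length) →
    ccNorm N d a ≤ CA * ε := by
  obtain ⟨Cd, hCd, hdown⟩ := down (N := N) (d := d) N (le_refl N)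
  refine ⟨Cd, hCd, ?_⟩
  intro ε hε a ha hbd
  refine hdown ε hε a ha ?_ hbd
  intro w h0 h1
  omega

lemma ttaMul_add_left (F F1 F2 y : TTA d) (hF : ∀ u, F u = F1 u + F2 u) (w : List (Fin d)) :
    ttaMul N d F y w = ttaMul N d F1 y w + ttaMul N d F2 y w := by
  by_cases hw : w.length ≤ N
  · rw [ttaMul_apply _ _ _ hw, ttaMul_apply _ _ _ hw, ttaMul_apply _ _ _ hw,
      ← Finset.sum_add_distrib]
    refine Finset.sum_congr rfl fun i _ => ?_
    rw [hF, add_mul]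
  · rw [ttaMul_apply_gt _ _ _ hw, ttaMul_apply_gt _ _ _ hw, ttaMul_apply_gt _ _ _ hw]
    ring

lemma sq_le_9pow : ∀ n : ℕ, 1 ≤ n → ((n : ℝ) + 1) ^ 2 ≤ 9 ^ n := by
  intro n
  induction n with
  | zero => omega
  | succ n ih =>
    intro _
    rcases Nat.eq_zero_or_pos n with rfl | hn
    · norm_num
    · have h1 := ih hn
      have h2 : ((n : ℝ) + 1 + 1) ^ 2 ≤ 4 * ((n : ℝ) + 1) ^ 2 := by nlinarith [Nat.cast_nonneg (α := ℝ) n]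
      have h3 : (0:ℝ) < 9 ^ n := by positivity
      calc ((↑(n + 1) : ℝ) + 1) ^ 2 = ((n : ℝ) + 1 + 1) ^ 2 := by push_cast; ring
        _ ≤ 4 * ((n : ℝ) + 1) ^ 2 := h2
        _ ≤ 4 * 9 ^ n := by nlinarith
        _ ≤ 9 ^ (n + 1) := by rw [pow_succ]; nlinarith
lemma tqs_le (hN : 1 ≤ N) {t s : ℝ} (ht : 0 < t) (hs : 0 < s) {q n : ℕ}
    (hq : 1 ≤ q) (hqn : q ≤ n) (hnN : n ≤ N) :
    t ^ q * s ^ (n - q) ≤ (max t (t ^ ((N : ℝ)⁻¹) * s ^ (1 - (N : ℝ)⁻¹))) ^ n := by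
  set α : ℝ := (N : ℝ)⁻¹ with hα
  have hNR : (1 : ℝ) ≤ (N : ℝ) := by exact_mod_cast hN
  have hα0 : 0 < α := by rw [hα]; positivity
  have hα1 : α ≤ 1 := by rw [hα]; exact inv_le_one_of_one_le₀ hNR
  have hnR : (n : ℝ) ≤ (N : ℝ) := by exact_mod_cast hnN
  rcases le_total s t with hst | hts
  · have h1 : t ^ q * s ^ (n - q) ≤ t ^ n := by
      calc t ^ q * s ^ (n - q) ≤ t ^ q * t ^ (n - q) :=
            mul_le_mul_of_nonneg_left (pow_le_pow_left₀ hs.le hst _) (by positivity)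
        _ = t ^ n := by rw [← pow_add]; congr 1; omega
    exact h1.trans (pow_le_pow_left₀ ht.le (le_max_left _ _) n)
  · have hn1 : 1 ≤ n := le_trans hq hqn
    have hA : t ^ q * s ^ (n - q) ≤ t * s ^ (n - 1) := by
      have e1 : t ^ q = t * t ^ (q - 1) := by
        rw [← pow_succ']; congr 1; omega
      have e2 : t ^ (q - 1) ≤ s ^ (q - 1) := pow_le_pow_left₀ ht.le hts _
      calc t ^ q * s ^ (n - q) = t * (t ^ (q - 1) * s ^ (n - q)) := by rw [e1]; ring
        _ ≤ t * (s ^ (q - 1) * s ^ (n - q)) := by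
            refine mul_le_mul_of_nonneg_left ?_ ht.le
            exact mul_le_mul_of_nonneg_right e2 (by positivity)
        _ = t * s ^ (n - 1) := by
            rw [← pow_add]
            congr 2
            omega
    have hB : t * s ^ (n - 1) ≤ (t ^ α * s ^ (1 - α)) ^ n := by
      have hrn : ((t ^ α * s ^ (1 - α)) : ℝ) ^ n = t ^ (α * (n : ℝ)) * s ^ ((1 - α) * (n : ℝ)) := by
        rw [mul_pow, ← Real.rpow_natCast (t ^ α) n, ← Real.rpow_natCast (s ^ (1 - α)) n,
          ← Real.rpow_mul ht.le, ← Real.rpow_mul hs.le]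
      have hsn : s ^ (n - 1) = s ^ (((n : ℝ)) - 1) := by
        rw [← Real.rpow_natCast s (n - 1)]
        congr 1
        push_cast [Nat.cast_sub hn1]
        ring
      have hαn1 : α * (n : ℝ) ≤ 1 := by
        rw [hα]
        rw [inv_mul_le_iff₀ (by positivity : (0 : ℝ) < (N : ℝ))]
        linarith
      have e3 : t = t ^ (α * (n : ℝ)) * t ^ (1 - α * (n : ℝ)) := by
        rw [← Real.rpow_add ht]
        norm_num
      have e4 : t ^ ((1 : ℝ) - α * (n : ℝ)) ≤ s ^ ((1 : ℝ) - α * (n : ℝ)) :=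
        Real.rpow_le_rpow ht.le hts (by linarith)
      have key : t * s ^ ((n : ℝ) - 1) ≤ t ^ (α * (n : ℝ)) * s ^ ((1 - α) * (n : ℝ)) := by
        calc t * s ^ ((n : ℝ) - 1)
            = t ^ (α * (n : ℝ)) * t ^ (1 - α * (n : ℝ)) * s ^ ((n : ℝ) - 1) := by rw [← e3]
          _ ≤ t ^ (α * (n : ℝ)) * s ^ (1 - α * (n : ℝ)) * s ^ ((n : ℝ) - 1) := by
              refine mul_le_mul_of_nonneg_right ?_ (Real.rpow_nonneg hs.le _)
              exact mul_le_mul_of_nonneg_left e4 (Real.rpow_nonneg ht.le _)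
          _ = t ^ (α * (n : ℝ)) * s ^ ((1 - α) * (n : ℝ)) := by
              rw [mul_assoc, ← Real.rpow_add hs]
              congr 2
              ring
      calc t * s ^ (n - 1) = t * s ^ ((n : ℝ) - 1) := by rw [hsn]
        _ ≤ t ^ (α * (n : ℝ)) * s ^ ((1 - α) * (n : ℝ)) := key
        _ = (t ^ α * s ^ (1 - α)) ^ n := hrn.symm
    refine (hA.trans hB).trans (pow_le_pow_left₀ ?_ (le_max_right _ _) n)
    positivity

lemma tendsto_rpow_base (x0 β : ℝ) (hβ : 0 ≤ β) :
    Filter.Tendsto (fun ρ : ℝ => (x0 + ρ) ^ β) (nhdsWithin 0 (Set.Ioi 0))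
      (nhds (x0 ^ β)) := by
  have h2 : Filter.Tendsto (fun ρ : ℝ => x0 + ρ) (nhds 0) (nhds (x0 + 0)) :=
    (continuous_const.add continuous_id).tendsto 0
  rw [add_zero] at h2
  have h1 := h2.mono_left (nhdsWithin_le_nhds (s := Set.Ioi (0:ℝ)))
  exact ((Real.continuousAt_rpow_const x0 β (Or.inr hβ)).tendsto).comp h1

lemma tendsto_base (x0 : ℝ) :
    Filter.Tendsto (fun ρ : ℝ => x0 + ρ) (nhdsWithin 0 (Set.Ioi 0)) (nhds x0) := by
  have h2 : Filter.Tendsto (fun ρ : ℝ => x0 + ρ) (nhds 0) (nhds (x0 + 0)) :=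
    (continuous_const.add continuous_id).tendsto 0
  rw [add_zero] at h2
  exact h2.mono_left (nhdsWithin_le_nhds (s := Set.Ioi (0:ℝ)))

end S14

/-- for `g, h ∈ G^N(ℝ^d)` there is `C = C(N,d)` with
`‖g⁻¹ ⊗ h ⊗ g‖ ≤ C max{‖h‖, ‖h‖^{1/N} ‖g‖^{1-1/N}}` in Carnot–Carathéodory norm. -/
theorem stmt_14 (N d : ℕ) (hN : 1 ≤ N) :
    ∃ C : ℝ, 0 < C ∧
      ∀ g h : TTA d, g ∈ FreeNilpotent N d → h ∈ FreeNilpotent N d →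
        ccNorm N d (ttaMul N d (ttaMul N d (ttaInv N d g) h) g) ≤
          C * max (ccNorm N d h)
            ((ccNorm N d h) ^ ((N : ℝ)⁻¹) * (ccNorm N d g) ^ (1 - (N : ℝ)⁻¹)) := by
  classical
  obtain ⟨CA, hCA, hA⟩ := S14.lemmaA (N := N) (d := d) hN
  refine ⟨9 * CA, by positivity, ?_⟩
  intro g h hg hh
  set α : ℝ := (N : ℝ)⁻¹ with hα
  have hNR : (1 : ℝ) ≤ (N : ℝ) := by exact_mod_cast hN
  have hα0 : 0 ≤ α := by rw [hα]; positivity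
  have hα1 : α ≤ 1 := by rw [hα]; exact inv_le_one_of_one_le₀ hNR
  set t0 := ccNorm N d h with ht0
  set s0 := ccNorm N d g with hs0
  have ht00 : 0 ≤ t0 := S14.ccNorm_nonneg h
  have hs00 : 0 ≤ s0 := S14.ccNorm_nonneg g
  set a : TTA d := ttaMul N d (ttaMul N d (ttaInv N d g) h) g with ha
  have main : ∀ ρ : ℝ, ρ ∈ Set.Ioi (0:ℝ) →
      ccNorm N d a ≤ 9 * CA * max (t0 + ρ) ((t0 + ρ) ^ α * (s0 + ρ) ^ (1 - α)) := by
    intro ρ hρ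
    rw [Set.mem_Ioi] at hρ
    obtain ⟨H, hH, hHlen⟩ := S14.exists_list_lt h hh hρ
    obtain ⟨G, hG, hGlen⟩ := S14.exists_list_lt g hg hρ
    set t := t0 + ρ with ht
    set s := s0 + ρ with hs
    have htpos : 0 < t := by rw [ht]; linarith
    have hspos : 0 < s := by rw [hs]; linarith
    have hHt : S14.lenSum H ≤ t := by rw [ht, ht0]; exact le_of_lt hHlen
    have hGs : S14.lenSum G ≤ s := by rw [hs, hs0]; exact le_of_lt hGlen
    set ε := max t (t ^ α * s ^ (1 - α)) with hε
    have hεt : t ≤ ε := le_max_left _ _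
    have hε0 : 0 < ε := lt_of_lt_of_le htpos hεt
    set x : TTA d := pwProd N d (invList G) with hx
    have hinv : ttaInv N d g = x := S14.ttaInv_eq g G hG
    have haxg : a = ttaMul N d (ttaMul N d x h) g := by rw [ha, hinv]
    have harep : pwProd N d (invList G ++ (H ++ G)) = a := by
      rw [S14.pwProd_append, S14.pwProd_append, hH, hG, haxg, S14.ttaMul_assoc]
    have hxu : ∀ u : List (Fin d), |x u| ≤ s ^ u.length := by
      intro u
      rw [hx]
      apply S14.pwProd_le'
      rw [S14.lenSum_invList]
      exact hGs
    have hgu : ∀ u : List (Fin d), |g u| ≤ s ^ u.length := by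
      intro u
      rw [← hG]
      exact S14.pwProd_le' G hGs u
    have hxTr : S14.Tr N x := by rw [hx]; exact S14.tr_pwProd _
    set δh : TTA d := fun u => h u - ttaOne d u with hδhdef
    have hδh0 : δh [] = 0 := by
      rw [hδhdef]
      simp only
      rw [← hH, S14.pwProd_nil_coeff, S14.ttaOne_nil, sub_self]
    have hδhu : ∀ u : List (Fin d), 0 < u.length → |δh u| ≤ t ^ u.length := by
      intro u hu
      rw [hδhdef]
      simp only
      rw [S14.ttaOne_pos u hu, sub_zero, ← hH]
      exact S14.pwProd_le' H hHt u
    have hbd : ∀ w : List (Fin d), |a w| ≤ (9 * ε) ^ w.length := by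
      intro w
      by_cases hw : w.length ≤ N
      · rcases Nat.eq_zero_or_pos w.length with h0 | hpos
        · have hwnil : w = [] := List.eq_nil_of_length_eq_zero h0
          subst hwnil
          rw [← harep, S14.pwProd_nil_coeff]
          simp
        · have hFeq : ∀ u, ttaMul N d x h u = ttaMul N d x δh u + x u := by
            intro u
            by_cases hu : u.length ≤ N
            · rw [S14.ttaMul_apply _ _ _ hu, S14.ttaMul_apply _ _ _ hu]
              have hterm : ∀ i ∈ Finset.range (u.length + 1),
                  x (u.take i) * h (u.drop i)
                  = x (u.take i) * δh (u.drop i) + x (u.take i) * ttaOne d (u.drop i) := by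
                intro i _
                rw [hδhdef]
                simp only
                ring
              rw [Finset.sum_congr rfl hterm, Finset.sum_add_distrib]
              congr 1
              have h1 := congrFun (S14.ttaMul_one x hxTr) u
              rw [S14.ttaMul_apply _ _ _ hu] at h1
              exact h1
            · rw [S14.ttaMul_apply_gt _ _ _ hu, S14.ttaMul_apply_gt _ _ _ hu, hxTr u (by omega)]
              ring
          have haw : a w = ttaMul N d (ttaMul N d x δh) g w := by
            rw [haxg, S14.ttaMul_add_left _ _ _ g hFeq w]
            have h2 : ttaMul N d x g w = 0 := by
              rw [← hG, hx, S14.pwProd_invList_mul G]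
              exact S14.ttaOne_pos w hpos
            rw [h2, add_zero]
          set n := w.length with hn
          have hinner : ∀ j, j ≤ n → |ttaMul N d x δh (w.take j)| * |g (w.drop j)|
              ≤ (n : ℝ) * ε ^ n := by
            intro j hj
            have hjt : (w.take j).length = j := by rw [List.length_take]; omega
            have hjd : (w.drop j).length = n - j := by rw [List.length_drop]
            have hgd : |g (w.drop j)| ≤ s ^ (n - j) := by
              have hgg := hgu (w.drop j)
              rwa [hjd] at hgg
            have hinn : |ttaMul N d x δh (w.take j)|
                ≤ ∑ i ∈ Finset.range (j + 1), (if i = j then 0 else s ^ i * t ^ (j - i)) := by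
              rw [S14.ttaMul_apply _ _ _ (by rw [hjt]; omega), hjt]
              refine (Finset.abs_sum_le_sum_abs _ _).trans (Finset.sum_le_sum ?_)
              intro i hi
              rw [Finset.mem_range] at hi
              have hii : i ≤ j := by omega
              rcases eq_or_lt_of_le hii with rfl | hilt
              · rw [if_pos rfl]
                have hdrop : (w.take i).drop i = [] := by
                  apply List.eq_nil_of_length_eq_zero
                  rw [List.length_drop, hjt]
                  omega
                rw [abs_mul, hdrop, hδh0, abs_zero, mul_zero]
              · rw [if_neg (by omega)]
                rw [abs_mul]
                have e1 : (w.take j).take i = w.take i := by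
                  rw [List.take_take]
                  congr 1
                  omega
                have e2x : |x ((w.take j).take i)| ≤ s ^ i := by
                  rw [e1]
                  have hh1 := hxu (w.take i)
                  rwa [List.length_take, Nat.min_eq_left (by omega)] at hh1
                have e2d : |δh ((w.take j).drop i)| ≤ t ^ (j - i) := by
                  have hlen : ((w.take j).drop i).length = j - i := by
                    rw [List.length_drop, hjt]
                  have hh2 := hδhu ((w.take j).drop i) (by omega)
                  rwa [hlen] at hh2
                exact mul_le_mul e2x e2d (abs_nonneg _) (by positivity)
            calc |ttaMul N d x δh (w.take j)| * |g (w.drop j)|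
                ≤ (∑ i ∈ Finset.range (j + 1), (if i = j then 0 else s ^ i * t ^ (j - i)))
                  * s ^ (n - j) := by
                  apply mul_le_mul hinn hgd (abs_nonneg _)
                  apply Finset.sum_nonneg
                  intro i _
                  split
                  · exact le_refl 0
                  · positivity
              _ = ∑ i ∈ Finset.range (j + 1),
                  (if i = j then 0 else s ^ i * t ^ (j - i)) * s ^ (n - j) := by
                  rw [Finset.sum_mul]
              _ ≤ ∑ i ∈ Finset.range (j + 1), (if i = j then 0 else ε ^ n) := by
                  apply Finset.sum_le_sum
                  intro i hi
                  rw [Finset.mem_range] at hi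
                  by_cases hij : i = j
                  · rw [if_pos hij, if_pos hij, zero_mul]
                  · rw [if_neg hij, if_neg hij]
                    have hqq : 1 ≤ j - i := by omega
                    have hrearr : s ^ i * t ^ (j - i) * s ^ (n - j)
                        = t ^ (j - i) * s ^ (n - (j - i)) := by
                      rw [mul_comm (s ^ i) (t ^ (j - i)), mul_assoc, ← pow_add]
                      congr 2
                      omega
                    rw [hrearr, hε]
                    exact S14.tqs_le hN htpos hspos hqq (by omega) (by omega)
              _ ≤ (n : ℝ) * ε ^ n := by
                  rw [Finset.sum_range_succ, if_pos rfl, add_zero]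
                  have : ∀ i ∈ Finset.range j, (if i = j then 0 else ε ^ n) = ε ^ n := by
                    intro i hi
                    rw [Finset.mem_range] at hi
                    rw [if_neg (by omega)]
                  rw [Finset.sum_congr rfl this, Finset.sum_const, Finset.card_range,
                    nsmul_eq_mul]
                  have hjn : (j : ℝ) ≤ (n : ℝ) := by exact_mod_cast hj
                  have hen : (0:ℝ) ≤ ε ^ n := by positivity
                  nlinarith
          rw [haw, S14.ttaMul_apply _ _ _ hw]
          calc |∑ j ∈ Finset.range (n + 1), ttaMul N d x δh (w.take j) * g (w.drop j)|
              ≤ ∑ j ∈ Finset.range (n + 1), |ttaMul N d x δh (w.take j) * g (w.drop j)| :=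
                Finset.abs_sum_le_sum_abs _ _
            _ ≤ ∑ _j ∈ Finset.range (n + 1), (n : ℝ) * ε ^ n := by
                apply Finset.sum_le_sum
                intro j hj
                rw [Finset.mem_range] at hj
                rw [abs_mul]
                exact hinner j (by omega)
            _ = ((n : ℝ) + 1) * ((n : ℝ) * ε ^ n) := by
                rw [Finset.sum_const, Finset.card_range, nsmul_eq_mul]
                push_cast
                ring
            _ ≤ ((n : ℝ) + 1) ^ 2 * ε ^ n := by
                have hnn : (n : ℝ) ≤ (n : ℝ) + 1 := by linarith
                have hen : (0:ℝ) ≤ ε ^ n := by positivity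
                have hn0 : (0:ℝ) ≤ (n : ℝ) := Nat.cast_nonneg n
                nlinarith
            _ ≤ 9 ^ n * ε ^ n := by
                refine mul_le_mul_of_nonneg_right (S14.sq_le_9pow n (by omega)) (by positivity)
            _ = (9 * ε) ^ n := (mul_pow _ _ _).symm
      · have hz : a w = 0 := by
          rw [ha]
          exact S14.tr_ttaMul _ _ w (by omega)
        rw [hz, abs_zero]
        positivity
    have happ := hA (9 * ε) (by positivity) a ⟨invList G ++ (H ++ G), harep⟩ hbd
    calc ccNorm N d a ≤ CA * (9 * ε) := happ
      _ = 9 * CA * ε := by ring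
  have cont : Filter.Tendsto
      (fun ρ : ℝ => 9 * CA * max (t0 + ρ) ((t0 + ρ) ^ α * (s0 + ρ) ^ (1 - α)))
      (nhdsWithin 0 (Set.Ioi 0)) (nhds (9 * CA * max t0 (t0 ^ α * s0 ^ (1 - α)))) := by
    apply Filter.Tendsto.const_mul
    apply Filter.Tendsto.max
    · exact S14.tendsto_base t0
    · exact (S14.tendsto_rpow_base t0 α hα0).mul
        (S14.tendsto_rpow_base s0 (1 - α) (by linarith))
  exact ge_of_tendsto cont (eventually_nhdsWithin_of_forall main)
end
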